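/- arXiv:math/9908139 — 2 statements merged into one kernel-verified Lean document; each statement's English description precedes it below -/
import Mathlib

section
/- (Poincaré–Birkhoff–Witt, via symmetrization) Let L be a Lie algebra over a field K of characteristic zero with basis X₁,…,Xₙ. The images in the universal enveloping algebra U(L) of the symmetrized monomials Sym(X^(α)) = (1/|α|!) Σ_{σ} X'_{σ(1)}⋯X'_{σ(|α|)}, as (α) ranges over all multi-indices of nonnegative integers, form a K-vector-space basis of U(L). -/
open scoped BigOperators

noncomputable section

/-- The word `X₁^{α₁} ⋯ Xₙ^{αₙ}` as a list of generator indices. -/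
def word (n : ℕ) (α : Fin n → ℕ) : List (Fin n) :=
  (List.finRange n).flatMap fun i => List.replicate (α i) i

/-- The symmetrization `symz(X^(α)) = (1/m!) ∑_{σ ∈ Σₘ} X'_{σ(1)} ⋯ X'_{σ(m)}`
of the monomial `X^(α)` in the free associative algebra. -/
def symz (K : Type) [Field K] (n : ℕ) (α : Fin n → ℕ) : FreeAlgebra K (Fin n) :=
  ((Nat.factorial (word n α).length : K))⁻¹ •
    ∑ σ : Equiv.Perm (Fin (word n α).length),
      (List.ofFn fun j => FreeAlgebra.ι K ((word n α).get (σ j))).prod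

/-- Regular homogeneous polynomials of degree `m`: the span of `m`-th powers of
linear forms in the generators. -/
def RegHom (K : Type) [Field K] (n m : ℕ) : Submodule K (FreeAlgebra K (Fin n)) :=
  Submodule.span K {x | ∃ c : Fin n → K, x = (∑ i, c i • FreeAlgebra.ι K i) ^ m}

/-- Regular polynomials: the span of all powers of linear forms in the generators. -/
def Reg (K : Type) [Field K] (n : ℕ) : Submodule K (FreeAlgebra K (Fin n)) :=
  Submodule.span K {x | ∃ (m : ℕ) (c : Fin n → K), x = (∑ i, c i • FreeAlgebra.ι K i) ^ m}

/-- The symmetrization map `Φ` from commutative polynomials to the free algebra,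
sending `x^(α)` to `symz(X^(α))` and extended linearly. -/
def Phi (K : Type) [Field K] (n : ℕ) (p : MvPolynomial (Fin n) K) : FreeAlgebra K (Fin n) :=
  ∑ d ∈ p.support, p.coeff d • symz K n (fun i => d i)


/-- The embedding of the Lie algebra `L` into the free algebra via the basis `b`. -/
def emb (K : Type) [Field K] (n : ℕ) {L : Type} [LieRing L] [LieAlgebra K L]
    (b : Module.Basis (Fin n) K L) (x : L) : FreeAlgebra K (Fin n) :=
  ∑ k, b.repr x k • FreeAlgebra.ι K k

/-- The two-sided ideal `J` generated by `XY - YX - [X,Y]`, `X, Y ∈ L`, realized as the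
span of all trinomial products `P (XY - YX - [X,Y]) Q`. -/
def Jspan (K : Type) [Field K] (n : ℕ) {L : Type} [LieRing L] [LieAlgebra K L]
    (b : Module.Basis (Fin n) K L) : Submodule K (FreeAlgebra K (Fin n)) :=
  Submodule.span K {x | ∃ (P Q : FreeAlgebra K (Fin n)) (X Y : L),
    x = P * (emb K n b X * emb K n b Y - emb K n b Y * emb K n b X - emb K n b ⁅X, Y⁆) * Q}

/-- Elements of degree at most `k` in the free algebra. -/
def Fdeg (K : Type) [Field K] (n k : ℕ) : Submodule K (FreeAlgebra K (Fin n)) :=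
  Submodule.span K {x | ∃ l : List (Fin n), l.length ≤ k ∧ x = (l.map (FreeAlgebra.ι K)).prod}


open MvPolynomial

variable {K : Type} [Field K] {n : ℕ}

/-- total degree of a multi-index -/
def gsz (β : Fin n →₀ ℕ) : ℕ := β.sum fun _ v => v

lemma gsz_add (a b : Fin n →₀ ℕ) : gsz (a + b) = gsz a + gsz b :=
  Finsupp.sum_add_index' (fun _ => rfl) (fun _ _ _ => rfl)

lemma gsz_single (i : Fin n) (m : ℕ) : gsz (Finsupp.single i m) = m :=
  Finsupp.sum_single_index rfl

lemma sub_add_single {β : Fin n →₀ ℕ} {j : Fin n} (h : j ∈ β.support) :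
    (β - Finsupp.single j 1) + Finsupp.single j 1 = β := by
  ext a
  by_cases ha : a = j
  · subst ha
    have : 1 ≤ β a := Nat.one_le_iff_ne_zero.mpr (Finsupp.mem_support_iff.mp h)
    simp [Finsupp.sub_apply, Finsupp.add_apply, Nat.sub_add_cancel this]
  · simp [Finsupp.sub_apply, Finsupp.add_apply, Finsupp.single_apply, Ne.symm ha]

lemma gsz_eq_succ {β : Fin n →₀ ℕ} {j : Fin n} (h : j ∈ β.support) :
    gsz β = gsz (β - Finsupp.single j 1) + 1 := by
  conv_lhs => rw [← sub_add_single h]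
  rw [gsz_add, gsz_single]

lemma gsz_sub_lt {β : Fin n →₀ ℕ} {j : Fin n} (h : j ∈ β.support) :
    gsz (β - Finsupp.single j 1) < gsz β := by
  rw [gsz_eq_succ h]; omega

/-- the recursively defined action of the generator `i` on monomials -/
def gg (br : Fin n → Fin n → Fin n → K) (i : Fin n) (β : Fin n →₀ ℕ) :
    MvPolynomial (Fin n) K :=
  if h : ∀ j ∈ β.support, i ≤ j then monomial (β + Finsupp.single i 1) 1
  else
    have hw : ∃ j ∈ β.support, j < i := by
      push_neg at h
      obtain ⟨j, hj1, hj2⟩ := h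
      exact ⟨j, hj1, hj2⟩
    have hne : β.support.Nonempty := ⟨hw.choose, hw.choose_spec.1⟩
    have hji : β.support.min' hne < i :=
      lt_of_le_of_lt (β.support.min'_le _ hw.choose_spec.1) hw.choose_spec.2
    have hjs : β.support.min' hne ∈ β.support := β.support.min'_mem hne
    have hlt : gsz (β - Finsupp.single (β.support.min' hne) 1) < gsz β := gsz_sub_lt hjs
    (∑ γ ∈ (gg br i (β - Finsupp.single (β.support.min' hne) 1)).support,
      (gg br i (β - Finsupp.single (β.support.min' hne) 1)).coeff γ •
        (if hγ : gsz γ ≤ gsz β then gg br (β.support.min' hne) γ else 0))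
    + ∑ k : Fin n, br i (β.support.min' hne) k • gg br k (β - Finsupp.single (β.support.min' hne) 1)
termination_by (gsz β, (i : ℕ))
decreasing_by
  · exact Prod.Lex.left _ _ hlt
  · rcases lt_or_eq_of_le hγ with h' | h'
    · exact Prod.Lex.left _ _ h'
    · rw [h']; exact Prod.Lex.right _ hji
  · exact Prod.Lex.left _ _ hlt

/-- the induction principle matching the recursion of `gg` -/
lemma gg_induction (motive : Fin n → (Fin n →₀ ℕ) → Prop)
    (H : ∀ (i : Fin n) (β : Fin n →₀ ℕ), (∀ (i' : Fin n) β', gsz β' < gsz β → motive i' β') →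
      (∀ (i' : Fin n) β', gsz β' ≤ gsz β → (i' : ℕ) < (i : ℕ) → motive i' β') →
      motive i β) :
    ∀ i β, motive i β := by
  suffices h : ∀ (N : ℕ) (i : Fin n) (β : Fin n →₀ ℕ), gsz β * (n + 1) + i ≤ N → motive i β by
    intro i β; exact h (gsz β * (n+1) + i) i β le_rfl
  intro N
  induction N with
  | zero =>
    intro i β hm
    have h0 : gsz β = 0 := by
      have h0' : gsz β * (n+1) = 0 := by omega
      rcases Nat.mul_eq_zero.mp h0' with h | h
      · exact h
      · omega
    apply H <;> (intro i' β' h1)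
    · omega
    · intro h2; omega
  | succ N ih =>
    intro i β hm
    apply H
    · intro i' β' h1
      apply ih
      have hi' : (i' : ℕ) < n + 1 := lt_of_lt_of_le i'.isLt (Nat.le_succ n)
      have : gsz β' * (n+1) + (n+1) ≤ gsz β * (n+1) :=
        by calc gsz β' * (n+1) + (n+1) = (gsz β' + 1) * (n+1) := by ring
          _ ≤ gsz β * (n+1) := Nat.mul_le_mul_right _ (by omega)
      omega
    · intro i' β' h1 h2
      apply ih
      have : gsz β' * (n+1) ≤ gsz β * (n+1) := Nat.mul_le_mul_right _ h1
      omega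

variable (br : Fin n → Fin n → Fin n → K)

lemma gg_pos {i : Fin n} {β : Fin n →₀ ℕ} (h : ∀ j ∈ β.support, i ≤ j) :
    gg br i β = monomial (β + Finsupp.single i 1) 1 := by
  rw [gg, dif_pos h]

lemma gg_neg_raw {i j : Fin n} {β : Fin n →₀ ℕ} (hjs : j ∈ β.support)
    (hmin : ∀ m ∈ β.support, j ≤ m) (hji : j < i) :
    gg br i β =
      (∑ γ ∈ (gg br i (β - Finsupp.single j 1)).support,
        (gg br i (β - Finsupp.single j 1)).coeff γ •
          (if gsz γ ≤ gsz β then gg br j γ else 0))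
      + ∑ k : Fin n, br i j k • gg br k (β - Finsupp.single j 1) := by
  have hneg : ¬ ∀ m ∈ β.support, i ≤ m := by
    intro hall
    exact absurd (hall j hjs) (not_le.mpr hji)
  have hmineq : ∀ hne : β.support.Nonempty, β.support.min' hne = j := fun hne =>
    le_antisymm (β.support.min'_le _ hjs) (hmin _ (β.support.min'_mem hne))
  rw [gg, dif_neg hneg]
  have hne0 : β.support.Nonempty := ⟨j, hjs⟩
  have e := hmineq hne0
  subst e
  simp only [dite_eq_ite]

/-- L1 : coefficient vanishing / degree bound for `gg` -/
lemma gg_L1 : ∀ (i : Fin n) (β γ : Fin n →₀ ℕ), gsz β + 2 ≤ gsz γ →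
    coeff γ (gg br i β) = 0 := by
  have main : ∀ (i : Fin n) (β : Fin n →₀ ℕ), ∀ γ, gsz β + 2 ≤ gsz γ →
      coeff γ (gg br i β) = 0 := by
    apply gg_induction (motive := fun i β => ∀ γ, gsz β + 2 ≤ gsz γ → coeff γ (gg br i β) = 0)
    intro i β IH1 IH2 γ hγ
    by_cases h : ∀ j ∈ β.support, i ≤ j
    · rw [gg_pos br h, coeff_monomial, if_neg]
      intro he
      have : gsz γ = gsz β + 1 := by rw [← he, gsz_add, gsz_single]
      omega
    · push_neg at h
      obtain ⟨j0, hj0s, hj0⟩ := h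
      have hne : β.support.Nonempty := ⟨j0, hj0s⟩
      set j := β.support.min' hne with hj
      have hjs : j ∈ β.support := β.support.min'_mem hne
      have hmin : ∀ m ∈ β.support, j ≤ m := fun m hm => β.support.min'_le _ hm
      have hji : j < i := lt_of_le_of_lt (β.support.min'_le _ hj0s) hj0
      rw [gg_neg_raw br hjs hmin hji]
      rw [coeff_add, coeff_sum]
      have hβ' : gsz β = gsz (β - Finsupp.single j 1) + 1 := gsz_eq_succ hjs
      have h1 : ∀ γ' ∈ (gg br i (β - Finsupp.single j 1)).support,
          coeff γ ((gg br i (β - Finsupp.single j 1)).coeff γ' •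
            (if gsz γ' ≤ gsz β then gg br j γ' else 0)) = 0 := by
        intro γ' _
        by_cases hle : gsz γ' ≤ gsz β
        · rw [if_pos hle, coeff_smul, IH2 j γ' hle hji γ (by omega), smul_zero]
        · rw [if_neg hle, smul_zero, coeff_zero]
      rw [Finset.sum_eq_zero h1, coeff_sum, Finset.sum_eq_zero, add_zero]
      intro k _
      rw [coeff_smul, IH1 k _ (gsz_sub_lt hjs) γ (by omega), smul_zero]
  exact main

lemma gg_supp {i : Fin n} {β γ : Fin n →₀ ℕ} (h : γ ∈ (gg br i β).support) :
    gsz γ ≤ gsz β + 1 := by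
  by_contra hc
  exact absurd (gg_L1 br i β γ (by omega)) (MvPolynomial.mem_support_iff.mp h)

/-- the clean recursion equation -/
lemma gg_neg {i j : Fin n} {β : Fin n →₀ ℕ} (hjs : j ∈ β.support)
    (hmin : ∀ m ∈ β.support, j ≤ m) (hji : j < i) :
    gg br i β =
      (∑ γ ∈ (gg br i (β - Finsupp.single j 1)).support,
        (gg br i (β - Finsupp.single j 1)).coeff γ • gg br j γ)
      + ∑ k : Fin n, br i j k • gg br k (β - Finsupp.single j 1) := by
  rw [gg_neg_raw br hjs hmin hji]
  congr 1
  apply Finset.sum_congr rfl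
  intro γ hγ
  have : gsz γ ≤ gsz β := by
    have := gg_supp br hγ
    have := gsz_eq_succ hjs
    omega
  rw [if_pos this]

/-- the linear extension of `gg` -/
def GG (i : Fin n) : MvPolynomial (Fin n) K →ₗ[K] MvPolynomial (Fin n) K :=
  ((MvPolynomial.basisMonomials (Fin n) K).constr K) (gg br i)

lemma GG_monomial (i : Fin n) (γ : Fin n →₀ ℕ) :
    GG br i (monomial γ 1) = gg br i γ := by
  have h := Module.Basis.constr_basis (MvPolynomial.basisMonomials (Fin n) K) K (gg br i) γ
  rw [MvPolynomial.coe_basisMonomials] at h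
  exact h

lemma GG_apply (i : Fin n) (p : MvPolynomial (Fin n) K) :
    GG br i p = ∑ γ ∈ p.support, coeff γ p • gg br i γ := by
  conv_lhs => rw [p.as_sum]
  rw [map_sum]
  apply Finset.sum_congr rfl
  intro γ _
  rw [← GG_monomial br i γ, ← map_smul, MvPolynomial.smul_monomial, smul_eq_mul, mul_one]

/-- polynomials with all monomials of size `< m` -/
def SDlt (K : Type) [Field K] (n m : ℕ) : Submodule K (MvPolynomial (Fin n) K) where
  carrier := {p | ∀ γ, m ≤ gsz γ → coeff γ p = 0}
  add_mem' := by
    intro a b ha hb γ h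
    rw [coeff_add, ha γ h, hb γ h, add_zero]
  zero_mem' := by intro γ h; rw [coeff_zero]
  smul_mem' := by
    intro c a ha γ h
    rw [MvPolynomial.coeff_smul, ha γ h, smul_zero]

lemma mem_SDlt {m : ℕ} {p : MvPolynomial (Fin n) K} :
    p ∈ SDlt K n m ↔ ∀ γ, m ≤ gsz γ → coeff γ p = 0 := Iff.rfl

lemma SDlt_mono {m m' : ℕ} (h : m ≤ m') : SDlt K n m ≤ SDlt K n m' := by
  intro p hp γ hγ
  exact hp γ (le_trans h hγ)

lemma monomial_mem_SDlt {γ : Fin n →₀ ℕ} {c : K} {m : ℕ} (h : gsz γ < m) :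
    (monomial γ c : MvPolynomial (Fin n) K) ∈ SDlt K n m := by
  intro γ' hγ'
  rw [coeff_monomial, if_neg]
  intro he; subst he; omega

lemma gg_mem_SDlt (i : Fin n) (β : Fin n →₀ ℕ) : gg br i β ∈ SDlt K n (gsz β + 2) :=
  fun γ hγ => gg_L1 br i β γ hγ

lemma GG_mem_SDlt {i : Fin n} {m : ℕ} {p : MvPolynomial (Fin n) K} (hp : p ∈ SDlt K n m) :
    GG br i p ∈ SDlt K n (m + 1) := by
  rw [GG_apply]
  apply Submodule.sum_mem
  intro γ hγ
  apply Submodule.smul_mem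
  have hγm : gsz γ + 1 ≤ m := by
    by_contra hc
    exact absurd (hp γ (by omega)) (MvPolynomial.mem_support_iff.mp hγ)
  exact SDlt_mono (by omega) (gg_mem_SDlt br i γ)

/-- A1 : `gg i β` is the monomial `β + eᵢ` plus lower-order terms -/
lemma gg_A1 : ∀ (i : Fin n) (β : Fin n →₀ ℕ),
    gg br i β - monomial (β + Finsupp.single i 1) 1 ∈ SDlt K n (gsz β + 1) := by
  apply gg_induction
    (motive := fun i β => gg br i β - monomial (β + Finsupp.single i 1) 1 ∈ SDlt K n (gsz β + 1))
  intro i β IH1 IH2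
  by_cases h : ∀ j ∈ β.support, i ≤ j
  · rw [gg_pos br h, sub_self]
    exact Submodule.zero_mem _
  · push_neg at h
    obtain ⟨j0, hj0s, hj0⟩ := h
    have hne : β.support.Nonempty := ⟨j0, hj0s⟩
    set j := β.support.min' hne with hj
    have hjs : j ∈ β.support := β.support.min'_mem hne
    have hmin : ∀ m ∈ β.support, j ≤ m := fun m hm => β.support.min'_le _ hm
    have hji : j < i := lt_of_le_of_lt (β.support.min'_le _ hj0s) hj0
    set β' := β - Finsupp.single j 1 with hβ'def
    have hβ' : gsz β = gsz β' + 1 := gsz_eq_succ hjs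
    have hG : (∑ γ ∈ (gg br i β').support, (gg br i β').coeff γ • gg br j γ) = GG br j (gg br i β') := (GG_apply br j _).symm
    rw [gg_neg br hjs hmin hji, hG]
    -- decompose gg br i β' = monomial (β' + eᵢ) + w
    have IHA := IH1 i β' (by omega)
    set w := gg br i β' - monomial (β' + Finsupp.single i 1) 1 with hw
    have hsplit : gg br i β' = monomial (β' + Finsupp.single i 1) 1 + w := by
      rw [hw]; ring
    rw [hsplit, map_add, GG_monomial]
    have IHB := IH2 j (β' + Finsupp.single i 1) (by rw [gsz_add, gsz_single]; omega) hji
    have key : β' + Finsupp.single i 1 + Finsupp.single j 1 = β + Finsupp.single i 1 := by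
      rw [add_right_comm, sub_add_single hjs]
    have goal_eq :
        gg br j (β' + Finsupp.single i 1) + GG br j w
          + (∑ k : Fin n, br i j k • gg br k β') - monomial (β + Finsupp.single i 1) 1
        = (gg br j (β' + Finsupp.single i 1)
            - monomial (β' + Finsupp.single i 1 + Finsupp.single j 1) 1)
          + GG br j w + (∑ k : Fin n, br i j k • gg br k β') := by
      rw [key]; ring
    rw [goal_eq]
    apply Submodule.add_mem
    apply Submodule.add_mem
    · exact SDlt_mono (by rw [gsz_add, gsz_single]; omega) IHB
    · have : GG br j w ∈ SDlt K n (gsz β' + 1 + 1) := GG_mem_SDlt br IHA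
      exact SDlt_mono (by omega) this
    · apply Submodule.sum_mem
      intro k _
      exact Submodule.smul_mem _ _ (SDlt_mono (by omega) (gg_mem_SDlt br k β'))

lemma support_sub_subset (β : Fin n →₀ ℕ) (j : Fin n) :
    (β - Finsupp.single j 1).support ⊆ β.support := by
  intro m hm
  rw [Finsupp.mem_support_iff] at hm ⊢
  intro h0
  apply hm
  rw [Finsupp.tsub_apply, h0]
  omega

lemma add_sub_single_cancel (β : Fin n →₀ ℕ) (j : Fin n) :
    (β + Finsupp.single j 1) - Finsupp.single j 1 = β := by
  ext a
  by_cases ha : a = j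
  · subst ha
    simp [Finsupp.tsub_apply, Finsupp.add_apply]
  · simp [Finsupp.tsub_apply, Finsupp.add_apply, Finsupp.single_apply, Ne.symm ha]

section Lie

variable {L : Type} [LieRing L] [LieAlgebra K L] (b : Module.Basis (Fin n) K L)

/-- structure constants -/
def brc : Fin n → Fin n → Fin n → K := fun i j k => b.repr ⁅b i, b j⁆ k

/-- the representation of `L` on polynomials -/
def rho : L →ₗ[K] (MvPolynomial (Fin n) K →ₗ[K] MvPolynomial (Fin n) K) :=
  b.constr K (fun i => GG (brc b) i)

lemma rho_basis (i : Fin n) : rho b (b i) = GG (brc b) i :=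
  Module.Basis.constr_basis b K _ i

lemma rho_apply (x : L) (p : MvPolynomial (Fin n) K) :
    rho b x p = ∑ k : Fin n, b.repr x k • GG (brc b) k p := by
  rw [rho, Module.Basis.constr_apply_fintype]
  rw [LinearMap.sum_apply]
  apply Finset.sum_congr rfl
  intro k _
  rw [LinearMap.smul_apply, Module.Basis.equivFun_apply]

lemma rho_monomial (x : L) (β : Fin n →₀ ℕ) :
    rho b x (monomial β 1) = ∑ k : Fin n, b.repr x k • gg (brc b) k β := by
  rw [rho_apply]
  apply Finset.sum_congr rfl
  intro k _
  rw [GG_monomial]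

/-- the commutator statement -/
def Dstmt (i j : Fin n) (β : Fin n →₀ ℕ) : Prop :=
  GG (brc b) i (gg (brc b) j β) - GG (brc b) j (gg (brc b) i β)
    = rho b ⁅b i, b j⁆ (monomial β 1)

/-- Case 1: `j` is below the support of `β` -/
lemma Dcase1 {i j : Fin n} (β : Fin n →₀ ℕ) (hji : j < i)
    (hmin : ∀ m ∈ β.support, j ≤ m) : Dstmt b i j β := by
  set br := brc b with hbr
  have h1 : gg br j β = monomial (β + Finsupp.single j 1) 1 := gg_pos br hmin
  have hjs' : j ∈ (β + Finsupp.single j 1).support := by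
    rw [Finsupp.mem_support_iff, Finsupp.add_apply, Finsupp.single_apply, if_pos rfl]
    omega
  have hmin' : ∀ m ∈ (β + Finsupp.single j 1).support, j ≤ m := by
    intro m hm
    rw [Finsupp.mem_support_iff, Finsupp.add_apply] at hm
    by_cases hβm : β m = 0
    · rw [hβm, Finsupp.single_apply] at hm
      by_cases hmj : j = m
      · omega
      · rw [if_neg hmj] at hm; omega
    · exact hmin m (Finsupp.mem_support_iff.mpr hβm)
  have h2 := gg_neg br hjs' hmin' hji
  rw [add_sub_single_cancel] at h2
  rw [Dstmt, h1, GG_monomial, h2, rho_monomial]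
  rw [← GG_apply]
  abel

end Lie

section Lie2

variable {L : Type} [LieRing L] [LieAlgebra K L] (b : Module.Basis (Fin n) K L)

/-- bilinearization of the commutator statement -/
lemma CfromD {β : Fin n →₀ ℕ} (hD : ∀ i j, Dstmt b i j β) (x y : L) :
    rho b x (rho b y (monomial β 1)) - rho b y (rho b x (monomial β 1))
      = rho b ⁅x, y⁆ (monomial β 1) := by
  set M : MvPolynomial (Fin n) K := monomial β 1 with hM
  let Z : L →ₗ[K] L →ₗ[K] MvPolynomial (Fin n) K := LinearMap.mk₂ K
    (fun x y => rho b x (rho b y M) - rho b y (rho b x M) - rho b ⁅x, y⁆ M)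
    (by intro u v y; simp only [map_add, LinearMap.add_apply, add_lie]; abel)
    (by intro c u y; simp only [map_smul, LinearMap.smul_apply, smul_lie, smul_sub])
    (by intro u v y; simp only [map_add, LinearMap.add_apply, lie_add]; abel)
    (by intro c u y; simp only [map_smul, LinearMap.smul_apply, lie_smul, smul_sub])
  have hZ : Z = 0 := by
    apply b.ext
    intro i
    apply b.ext
    intro j
    have hd := hD i j
    rw [Dstmt] at hd
    show rho b (b i) (rho b (b j) M) - rho b (b j) (rho b (b i) M) - rho b ⁅b i, b j⁆ M = 0
    rw [rho_basis, rho_basis, GG_monomial, GG_monomial, ← hM] at *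
    rw [hd]
    abel
  have := LinearMap.congr_fun (LinearMap.congr_fun hZ x) y
  simp only [LinearMap.zero_apply] at this
  have h2 : rho b x (rho b y M) - rho b y (rho b x M) - rho b ⁅x, y⁆ M = 0 := this
  rw [sub_eq_zero] at h2
  exact h2

/-- extension of the commutator statement to low-degree polynomials -/
lemma DextSmall {N : ℕ} (hD : ∀ γ, gsz γ < N → ∀ i j, Dstmt b i j γ)
    {p : MvPolynomial (Fin n) K} (hp : p ∈ SDlt K n N) (x y : L) :
    rho b x (rho b y p) - rho b y (rho b x p) = rho b ⁅x, y⁆ p := by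
  set T : MvPolynomial (Fin n) K →ₗ[K] MvPolynomial (Fin n) K :=
    (rho b x).comp (rho b y) - (rho b y).comp (rho b x) - rho b ⁅x, y⁆ with hT
  have hTp : T p = 0 := by
    conv_lhs => rw [p.as_sum]
    rw [map_sum, Finset.sum_eq_zero]
    intro γ hγ
    have hγN : gsz γ < N := by
      by_contra hc
      exact absurd (hp γ (by omega)) (MvPolynomial.mem_support_iff.mp hγ)
    have : (monomial γ) (coeff γ p) = coeff γ p • monomial γ (1:K) := by
      rw [MvPolynomial.smul_monomial, smul_eq_mul, mul_one]
    rw [this, map_smul]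
    have h0 : T (monomial γ (1:K)) = 0 := by
      rw [hT]
      simp only [LinearMap.sub_apply, LinearMap.comp_apply]
      have := CfromD b (hD γ hγN) x y
      rw [this]
      abel
    rw [h0, smul_zero]
  have : T p = rho b x (rho b y p) - rho b y (rho b x p) - rho b ⁅x, y⁆ p := by
    rw [hT]; simp only [LinearMap.sub_apply, LinearMap.comp_apply]
  rw [this] at hTp
  rw [sub_eq_zero] at hTp
  exact hTp

end Lie2

section Lie3

variable {L : Type} [LieRing L] [LieAlgebra K L] (b : Module.Basis (Fin n) K L)

lemma gg_eq_rho (c : Fin n) (β : Fin n →₀ ℕ) :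
    gg (brc b) c β = rho b (b c) (monomial β 1) := by
  rw [rho_basis, GG_monomial]

/-- the inductive step for the commutator relation -/
lemma Dstep (β : Fin n →₀ ℕ)
    (IH : ∀ γ, gsz γ < gsz β → ∀ i j, Dstmt b i j γ) :
    ∀ i j, Dstmt b i j β := by
  set br := brc b with hbr
  -- the core case j < i
  have core : ∀ i j : Fin n, j < i → Dstmt b i j β := by
    intro i j hji
    by_cases hcase : ∀ m ∈ β.support, j ≤ m
    · exact Dcase1 b β hji hcase
    · push_neg at hcase
      obtain ⟨m0, hm0s, hm0⟩ := hcase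
      have hne : β.support.Nonempty := ⟨m0, hm0s⟩
      set k := β.support.min' hne with hk
      have hks : k ∈ β.support := β.support.min'_mem hne
      have hkmin : ∀ m ∈ β.support, k ≤ m := fun m hm => β.support.min'_le _ hm
      have hkj : k < j := lt_of_le_of_lt (β.support.min'_le _ hm0s) hm0
      have hki : k < i := lt_trans hkj hji
      set β' := β - Finsupp.single k 1 with hβ'def
      have hβ : gsz β = gsz β' + 1 := gsz_eq_succ hks
      have hβ'lt : gsz β' < gsz β := by omega
      have hkmin' : ∀ m ∈ β'.support, k ≤ m := fun m hm =>
        hkmin m (support_sub_subset β k hm)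
      have hDβ' : ∀ i' j', Dstmt b i' j' β' := fun i' j' => IH β' hβ'lt i' j'
      have hMβ : (monomial β 1 : MvPolynomial (Fin n) K)
          = rho b (b k) (monomial β' 1) := by
        rw [← gg_eq_rho, gg_pos br hkmin', hβ'def, sub_add_single hks]
      -- commuting rho (b a) past rho (b k) on gg br c β'
      have comm_past : ∀ c a : Fin n, k < a → k ≤ c →
          rho b (b a) (rho b (b k) (gg br c β'))
            = rho b (b k) (rho b (b a) (gg br c β'))
              + rho b ⁅b a, b k⁆ (gg br c β') := by
        intro c a hka hkc
        set γc := β' + Finsupp.single c 1 with hγc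
        set w := gg br c β' - monomial γc 1 with hw
        have hwmem : w ∈ SDlt K n (gsz β) := by
          rw [hβ]
          exact gg_A1 br c β'
        have hsplit : gg br c β' = monomial γc 1 + w := by rw [hw]; ring
        have hminγ : ∀ m ∈ γc.support, k ≤ m := by
          intro m hm
          have := Finsupp.support_add hm
          rw [Finset.mem_union] at this
          rcases this with h | h
          · exact hkmin' m h
          · have := Finsupp.support_single_subset h
            rw [Finset.mem_singleton] at this
            omega
        have hmono := Dcase1 b γc hka hminγ
        rw [Dstmt] at hmono
        rw [← rho_basis b a, ← rho_basis b k, ← hbr] at hmono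
        have hmono' : rho b (b a) (rho b (b k) ((monomial γc 1 : MvPolynomial (Fin n) K)))
            = rho b (b k) (rho b (b a) (monomial γc 1))
              + rho b ⁅b a, b k⁆ (monomial γc 1) := by
          rw [← gg_eq_rho, ← gg_eq_rho, ← hbr] at *
          linear_combination hmono
        have hwcomm := DextSmall b (fun γ hγ => IH γ (by omega)) hwmem (b a) (b k)
        rw [hsplit]
        simp only [map_add]
        linear_combination hmono' + hwcomm
      -- the two recursion equations
      have Ej : gg br j β = rho b (b k) (gg br j β')
          + rho b ⁅b j, b k⁆ (monomial β' 1) := by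
        rw [gg_neg br hks hkmin hkj, ← hβ'def, ← GG_apply, ← rho_basis,
          rho_monomial, hbr]
        rfl
      have Ei : gg br i β = rho b (b k) (gg br i β')
          + rho b ⁅b i, b k⁆ (monomial β' 1) := by
        rw [gg_neg br hks hkmin hki, ← hβ'def, ← GG_apply, ← rho_basis,
          rho_monomial, hbr]
        rfl
      -- expansions
      have hqj : gg br j β' = rho b (b j) (monomial β' 1) := gg_eq_rho b j β'
      have hqi : gg br i β' = rho b (b i) (monomial β' 1) := gg_eq_rho b i β'
      have hA : rho b (b i) (gg br j β)
          = rho b (b k) (rho b (b i) (gg br j β'))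
            + rho b ⁅b i, b k⁆ (gg br j β')
            + (rho b ⁅b j, b k⁆ (rho b (b i) (monomial β' 1))
              + rho b ⁅b i, ⁅b j, b k⁆⁆ (monomial β' 1)) := by
        rw [Ej, map_add]
        have h1 := comm_past j i hki hkj.le
        have h2 := CfromD b hDβ' (b i) ⁅b j, b k⁆
        linear_combination h1 + h2
      have hB : rho b (b j) (gg br i β)
          = rho b (b k) (rho b (b j) (gg br i β'))
            + rho b ⁅b j, b k⁆ (rho b (b i) (monomial β' 1))
            + (rho b ⁅b i, b k⁆ (gg br j β')
              + rho b ⁅b j, ⁅b i, b k⁆⁆ (monomial β' 1)) := by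
        rw [Ei, map_add]
        have h1 := comm_past i j hkj hki.le
        have h2 := CfromD b hDβ' (b j) ⁅b i, b k⁆
        rw [hqi] at h1
        rw [hqj, hqi] at *
        linear_combination h1 + h2
      -- induction hypothesis at β', pushed through rho (b k)
      have hIHij := hDβ' i j
      rw [Dstmt, ← rho_basis b i, ← rho_basis b j, ← hbr] at hIHij
      have hIH' : rho b (b k) (rho b (b i) (gg br j β'))
          - rho b (b k) (rho b (b j) (gg br i β'))
          = rho b (b k) (rho b ⁅b i, b j⁆ (monomial β' 1)) := by
        rw [← map_sub, hIHij]
      -- Jacobi identity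
      have hJac : ⁅b i, ⁅b j, b k⁆⁆ - ⁅b j, ⁅b i, b k⁆⁆ = ⁅⁅b i, b j⁆, b k⁆ := by
        rw [lie_lie]
      have hJac' : rho b ⁅b i, ⁅b j, b k⁆⁆ (monomial β' 1)
          - rho b ⁅b j, ⁅b i, b k⁆⁆ (monomial β' 1)
          = rho b ⁅⁅b i, b j⁆, b k⁆ (monomial β' 1) := by
        rw [← LinearMap.sub_apply, ← map_sub, hJac]
      -- target expansion
      have hT : rho b ⁅b i, b j⁆ (monomial β 1)
          = rho b (b k) (rho b ⁅b i, b j⁆ (monomial β' 1))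
            + rho b ⁅⁅b i, b j⁆, b k⁆ (monomial β' 1) := by
        rw [hMβ]
        have := CfromD b hDβ' ⁅b i, b j⁆ (b k)
        linear_combination this
      rw [Dstmt, ← rho_basis b i, ← rho_basis b j, ← hbr]
      linear_combination hA - hB + hIH' + hJac' - hT
  -- trichotomy
  intro i j
  rcases lt_trichotomy j i with h | h | h
  · exact core i j h
  · subst h
    rw [Dstmt, sub_self, lie_self, map_zero]
    rfl
  · have h2 := core j i h
    rw [Dstmt] at h2 ⊢
    have hskew : ⁅b i, b j⁆ = -⁅b j, b i⁆ := (lie_skew _ _).symm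
    rw [hskew, map_neg]
    simp only [LinearMap.neg_apply]
    linear_combination -h2

/-- the commutator relation holds for all monomials -/
lemma Dmain : ∀ (β : Fin n →₀ ℕ) (i j : Fin n), Dstmt b i j β := by
  suffices h : ∀ (N : ℕ) (β : Fin n →₀ ℕ), gsz β ≤ N → ∀ i j, Dstmt b i j β by
    intro β i j; exact h (gsz β) β le_rfl i j
  intro N
  induction N with
  | zero =>
    intro β h0
    exact Dstep b β (fun γ hγ => by omega)
  | succ N ih =>
    intro β h0
    exact Dstep b β (fun γ hγ i j => ih γ (by omega) i j)

/-- the full commutator relation -/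
lemma rho_comm (x y : L) (p : MvPolynomial (Fin n) K) :
    rho b x (rho b y p) - rho b y (rho b x p) = rho b ⁅x, y⁆ p := by
  have hD : ∀ γ : Fin n →₀ ℕ, gsz γ < gsz γ + 1 → ∀ i j, Dstmt b i j γ :=
    fun γ _ i j => Dmain b γ i j
  -- redo DextSmall argument without degree restriction
  set T : MvPolynomial (Fin n) K →ₗ[K] MvPolynomial (Fin n) K :=
    (rho b x).comp (rho b y) - (rho b y).comp (rho b x) - rho b ⁅x, y⁆ with hT
  have hTp : T p = 0 := by
    conv_lhs => rw [p.as_sum]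
    rw [map_sum, Finset.sum_eq_zero]
    intro γ hγ
    have : (monomial γ) (coeff γ p) = coeff γ p • monomial γ (1:K) := by
      rw [MvPolynomial.smul_monomial, smul_eq_mul, mul_one]
    rw [this, map_smul]
    have h0 : T (monomial γ (1:K)) = 0 := by
      rw [hT]
      simp only [LinearMap.sub_apply, LinearMap.comp_apply]
      have := CfromD b (fun i j => Dmain b γ i j) x y
      rw [this]
      abel
    rw [h0, smul_zero]
  have : T p = rho b x (rho b y p) - rho b y (rho b x p) - rho b ⁅x, y⁆ p := by
    rw [hT]; simp only [LinearMap.sub_apply, LinearMap.comp_apply]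
  rw [this] at hTp
  rw [sub_eq_zero] at hTp
  exact hTp

end Lie3


section Rep

variable {K : Type} [Field K] {n : ℕ} {L : Type} [LieRing L] [LieAlgebra K L]
variable (b : Module.Basis (Fin n) K L)

/-- the algebra morphism from the free algebra to endomorphisms of polynomials -/
def Phimap : FreeAlgebra K (Fin n) →ₐ[K] Module.End K (MvPolynomial (Fin n) K) :=
  FreeAlgebra.lift K (fun i => rho b (b i))

lemma Phimap_ι (i : Fin n) : Phimap b (FreeAlgebra.ι K i) = rho b (b i) := by
  rw [Phimap, FreeAlgebra.lift_ι_apply]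

lemma Phimap_emb (x : L) : Phimap b (emb K n b x) = rho b x := by
  rw [emb, map_sum]
  conv_rhs => rw [← b.sum_repr x, map_sum]
  apply Finset.sum_congr rfl
  intro k _
  rw [map_smul, map_smul, Phimap_ι]

lemma Phimap_rel (X Y : L) :
    Phimap b (emb K n b X * emb K n b Y - emb K n b Y * emb K n b X
      - emb K n b ⁅X, Y⁆) = 0 := by
  rw [map_sub, map_sub, map_mul, map_mul, Phimap_emb, Phimap_emb, Phimap_emb]
  apply LinearMap.ext
  intro p
  have := rho_comm b X Y p
  simp only [LinearMap.sub_apply, Module.End.mul_apply, LinearMap.zero_apply]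
  linear_combination this

/-- the evaluation map : x ↦ Φ(x)(1) -/
def Psi : FreeAlgebra K (Fin n) →ₗ[K] MvPolynomial (Fin n) K where
  toFun := fun x => Phimap b x (1 : MvPolynomial (Fin n) K)
  map_add' := by intro x y; simp only [map_add, LinearMap.add_apply]
  map_smul' := by intro c x; simp only [map_smul, LinearMap.smul_apply, RingHom.id_apply]

lemma Jspan_le_ker : Jspan K n b ≤ LinearMap.ker (Psi b) := by
  rw [Jspan, Submodule.span_le]
  rintro x ⟨P, Q, X, Y, rfl⟩
  rw [SetLike.mem_coe, LinearMap.mem_ker]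
  show Phimap b _ 1 = 0
  rw [map_mul, map_mul, Phimap_rel, Module.End.mul_apply, Module.End.mul_apply,
    LinearMap.zero_apply, map_zero]

end Rep

section Words

variable {K : Type} [Field K] {n : ℕ}

/-- the product of generators along a word -/
def wordProd (K : Type) [Field K] {n : ℕ} (l : List (Fin n)) : FreeAlgebra K (Fin n) :=
  (l.map (FreeAlgebra.ι K)).prod

lemma wordProd_nil : wordProd K ([] : List (Fin n)) = 1 := rfl

lemma wordProd_cons (i : Fin n) (l : List (Fin n)) :
    wordProd K (i :: l) = FreeAlgebra.ι K i * wordProd K l := by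
  rw [wordProd, wordProd, List.map_cons, List.prod_cons]

lemma wordProd_append (l l' : List (Fin n)) :
    wordProd K (l ++ l') = wordProd K l * wordProd K l' := by
  rw [wordProd, wordProd, wordProd, List.map_append, List.prod_append]

/-- the multidegree of a word -/
def cnt {n : ℕ} (l : List (Fin n)) : Fin n →₀ ℕ :=
  (l.map fun i => Finsupp.single i 1).sum

lemma cnt_nil : cnt ([] : List (Fin n)) = 0 := rfl

lemma cnt_cons (i : Fin n) (l : List (Fin n)) :
    cnt (i :: l) = Finsupp.single i 1 + cnt l := by
  rw [cnt, cnt, List.map_cons, List.sum_cons]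

lemma cnt_append (l l' : List (Fin n)) : cnt (l ++ l') = cnt l + cnt l' := by
  rw [cnt, cnt, cnt, List.map_append, List.sum_append]

lemma gsz_cnt (l : List (Fin n)) : gsz (cnt l) = l.length := by
  induction l with
  | nil => rw [cnt_nil]; rfl
  | cons i l ih => rw [cnt_cons, gsz_add, gsz_single, ih, List.length_cons]; omega

lemma cnt_perm {l l' : List (Fin n)} (h : l.Perm l') : cnt l = cnt l' :=
  (h.map _).sum_eq

lemma cnt_apply (l : List (Fin n)) (j : Fin n) : cnt l j = l.count j := by
  induction l with
  | nil => rfl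
  | cons i l ih =>
    rw [cnt_cons, Finsupp.add_apply, ih, List.count_cons]
    by_cases hij : i = j
    · subst hij; simp; omega
    · simp [Finsupp.single_apply, hij, Ne.symm hij]

lemma cnt_replicate (m : ℕ) (i : Fin n) :
    cnt (List.replicate m i) = Finsupp.single i m := by
  induction m with
  | zero => simp [cnt_nil]
  | succ m ih =>
    rw [List.replicate_succ, cnt_cons, ih, ← Finsupp.single_add]
    congr 1
    omega

lemma cnt_flatMap {α : Type} (l : List α) (f : α → List (Fin n)) :
    cnt (l.flatMap f) = (l.map fun a => cnt (f a)).sum := by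
  induction l with
  | nil => rfl
  | cons a l ih => rw [List.flatMap_cons, cnt_append, ih, List.map_cons, List.sum_cons]

lemma list_sum_eq_finset_sum {M : Type} [AddCommMonoid M] (f : Fin n → M) :
    ((List.finRange n).map f).sum = ∑ i : Fin n, f i := by
  rw [← List.ofFn_eq_map, List.sum_ofFn]

lemma cnt_word (α : Fin n → ℕ) :
    cnt (word n α) = Finsupp.equivFunOnFinite.symm α := by
  rw [word, cnt_flatMap]
  have : ((List.finRange n).map fun a => cnt (List.replicate (α a) a)).sum
      = ((List.finRange n).map fun a => Finsupp.single a (α a)).sum := by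
    congr 1
    apply List.map_congr_left
    intro a _
    rw [cnt_replicate]
  rw [this, list_sum_eq_finset_sum]
  ext j
  rw [Finsupp.finset_sum_apply]
  simp only [Finsupp.single_apply]
  have hsum : (∑ x : Fin n, if x = j then α x else 0)
      = ∑ x : Fin n, if x = j then α j else 0 := by
    apply Finset.sum_congr rfl
    intro x _
    by_cases hxj : x = j
    · subst hxj; rfl
    · rw [if_neg hxj, if_neg hxj]
  rw [hsum, Finset.sum_ite_eq' Finset.univ j (fun _ => α j), if_pos (Finset.mem_univ j)]
  simp [Finsupp.equivFunOnFinite]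
  rfl

lemma length_word (α : Fin n → ℕ) :
    (word n α).length = gsz (Finsupp.equivFunOnFinite.symm α) := by
  rw [word, List.length_flatMap]
  have h1 : (List.map (fun a => (List.replicate (α a) a).length)
      (List.finRange n)).sum = ((List.finRange n).map α).sum := by
    congr 1
    apply List.map_congr_left
    intro a _
    simp
  rw [h1, list_sum_eq_finset_sum]
  rw [gsz, Finsupp.sum_fintype]
  · apply Finset.sum_congr rfl
    intro i _
    simp [Finsupp.equivFunOnFinite]
    rfl
  · intro i; rfl

end Words

section PsiWords

variable {K : Type} [Field K] {n : ℕ} {L : Type} [LieRing L] [LieAlgebra K L]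
variable (b : Module.Basis (Fin n) K L)

lemma Psi_one : Psi b (1 : FreeAlgebra K (Fin n)) = 1 := by
  show Phimap b 1 1 = 1
  rw [map_one (Phimap b)]
  rfl

lemma Psi_ι_mul (i : Fin n) (x : FreeAlgebra K (Fin n)) :
    Psi b (FreeAlgebra.ι K i * x) = GG (brc b) i (Psi b x) := by
  show Phimap b _ 1 = _
  rw [map_mul, Module.End.mul_apply, Phimap_ι, rho_basis]
  rfl

/-- evaluation of word products : leading monomial plus lower order terms -/
lemma Psi_word (l : List (Fin n)) :
    Psi b (wordProd K l) - monomial (cnt l) 1 ∈ SDlt K n l.length := by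
  induction l with
  | nil =>
    rw [wordProd_nil, Psi_one, cnt_nil]
    have : (monomial (0 : Fin n →₀ ℕ) (1:K)) = 1 := by
      rw [monomial_zero']; rfl
    rw [this, sub_self]
    exact Submodule.zero_mem _
  | cons i l ih =>
    rw [wordProd_cons, Psi_ι_mul, List.length_cons]
    set r := Psi b (wordProd K l) - monomial (cnt l) 1 with hr
    have hsplit : Psi b (wordProd K l) = monomial (cnt l) 1 + r := by rw [hr]; ring
    rw [hsplit, map_add, GG_monomial]
    have h1 : gg (brc b) i (cnt l) - monomial (cnt l + Finsupp.single i 1) 1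
        ∈ SDlt K n (l.length + 1) := by
      have := gg_A1 (brc b) i (cnt l)
      rw [gsz_cnt] at this
      exact this
    have h2 : GG (brc b) i r ∈ SDlt K n (l.length + 1) := by
      apply GG_mem_SDlt
      exact ih
    have hcnt : cnt (i :: l) = cnt l + Finsupp.single i 1 := by
      rw [cnt_cons, add_comm]
    rw [hcnt]
    have : gg (brc b) i (cnt l) + GG (brc b) i r - monomial (cnt l + Finsupp.single i 1) 1
        = (gg (brc b) i (cnt l) - monomial (cnt l + Finsupp.single i 1) 1)
          + GG (brc b) i r := by ring
    rw [this]
    exact Submodule.add_mem _ h1 h2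

end PsiWords

section PermWords

variable {K : Type} [Field K] {n : ℕ}

lemma ofFn_perm {m : ℕ} (f : Fin m → Fin n) (σ : Equiv.Perm (Fin m)) :
    (List.ofFn fun j => f (σ j)).Perm (List.ofFn f) := by
  have h1 : (List.ofFn fun j => f (σ j)) = (List.ofFn σ).map f := by
    rw [List.map_ofFn]
    rfl
  have h2 : (List.ofFn σ).Perm (List.finRange m) := by
    rw [List.ofFn_eq_map]
    apply List.Perm.symm
    rw [← Multiset.coe_eq_coe]
    have : (Finset.univ.map σ.toEmbedding) = (Finset.univ : Finset (Fin m)) :=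
      Finset.map_univ_equiv σ
    have hval := congrArg Finset.val this
    rw [Finset.map_val] at hval
    have huniv : (Finset.univ : Finset (Fin m)).val = ↑(List.finRange m) := rfl
    rw [huniv] at hval
    rw [← hval]
    rfl
  have h3 : ((List.ofFn σ).map f).Perm ((List.finRange m).map f) := h2.map f
  rw [h1]
  rw [← List.ofFn_eq_map] at h3
  exact h3

/-- each permuted word of `word n α` is a permutation of it -/
lemma perm_word (α : Fin n → ℕ) (σ : Equiv.Perm (Fin (word n α).length)) :
    (List.ofFn fun j => (word n α).get (σ j)).Perm (word n α) := by
  have := ofFn_perm (word n α).get σ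
  rw [List.ofFn_get] at this
  exact this

end PermWords

section Symz

variable {K : Type} [Field K] [CharZero K] {n : ℕ} {L : Type} [LieRing L] [LieAlgebra K L]
variable (b : Module.Basis (Fin n) K L)

lemma Psi_symz (α : Fin n → ℕ) :
    Psi b (symz K n α) - monomial (Finsupp.equivFunOnFinite.symm α) 1
      ∈ SDlt K n (gsz (Finsupp.equivFunOnFinite.symm α)) := by
  have key : ∀ σ : Equiv.Perm (Fin (word n α).length),
      Psi b ((List.ofFn fun j => FreeAlgebra.ι K ((word n α).get (σ j))).prod)
        - monomial (Finsupp.equivFunOnFinite.symm α) 1 ∈ SDlt K n (gsz (Finsupp.equivFunOnFinite.symm α)) := by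
    intro σ
    have hw : (List.ofFn fun j => FreeAlgebra.ι K ((word n α).get (σ j))).prod
        = wordProd K (List.ofFn fun j => (word n α).get (σ j)) := by
      rw [wordProd, List.map_ofFn]
      rfl
    rw [hw]
    have h1 := Psi_word b (List.ofFn fun j => (word n α).get (σ j))
    rw [cnt_perm (perm_word α σ), cnt_word, List.length_ofFn] at h1
    rw [← length_word α]
    exact h1
  rw [symz, map_smul, map_sum]
  have hcard : (Fintype.card (Equiv.Perm (Fin (word n α).length)))
      = (word n α).length.factorial := by
    rw [Fintype.card_perm, Fintype.card_fin]
  have hne : (((word n α).length.factorial : ℕ) : K) ≠ 0 :=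
    Nat.cast_ne_zero.mpr (Nat.factorial_ne_zero _)
  have heq : ((((word n α).length.factorial : ℕ) : K))⁻¹ •
        (∑ σ : Equiv.Perm (Fin (word n α).length),
          Psi b ((List.ofFn fun j => FreeAlgebra.ι K ((word n α).get (σ j))).prod))
        - monomial (Finsupp.equivFunOnFinite.symm α) 1
      = ((((word n α).length.factorial : ℕ) : K))⁻¹ •
        (∑ σ : Equiv.Perm (Fin (word n α).length),
          (Psi b ((List.ofFn fun j => FreeAlgebra.ι K ((word n α).get (σ j))).prod)
            - monomial (Finsupp.equivFunOnFinite.symm α) 1)) := by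
    rw [Finset.sum_sub_distrib, smul_sub]
    congr 1
    rw [Finset.sum_const, Finset.card_univ, hcard]
    rw [← Nat.cast_smul_eq_nsmul K, ← smul_assoc, smul_eq_mul,
      inv_mul_cancel₀ hne, one_smul]
  rw [heq]
  exact Submodule.smul_mem _ _ (Submodule.sum_mem _ (fun σ _ => key σ))

/-- linear independence of the symmetrized monomials in the quotient -/
theorem indep_symz :
    LinearIndependent K (fun α : Fin n → ℕ => (Jspan K n b).mkQ (symz K n α)) := by
  set Pb := ((Jspan K n b).liftQ (Psi b) (Jspan_le_ker b)) with hPb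
  apply LinearIndependent.of_comp Pb
  have hfam : (⇑Pb ∘ fun α : Fin n → ℕ => (Jspan K n b).mkQ (symz K n α))
      = fun α => Psi b (symz K n α) := by
    funext α
    show Pb ((Jspan K n b).mkQ _) = _
    rw [← LinearMap.comp_apply, Submodule.liftQ_mkQ]
  rw [hfam]
  rw [linearIndependent_iff]
  intro c hc
  by_contra hcne
  have hsupp : c.support.Nonempty := Finsupp.support_nonempty_iff.mpr hcne
  obtain ⟨α₀, hα₀s, hmax⟩ := Finset.exists_max_image c.support
    (fun α => gsz (Finsupp.equivFunOnFinite.symm α)) hsupp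
  rw [Finsupp.linearCombination_apply, Finsupp.sum] at hc
  have hco := congrArg (coeff (Finsupp.equivFunOnFinite.symm α₀)) hc
  rw [MvPolynomial.coeff_sum, coeff_zero] at hco
  have hval : ∀ α ∈ c.support,
      coeff (Finsupp.equivFunOnFinite.symm α₀) (Psi b (symz K n α))
        = if α = α₀ then 1 else 0 := by
    intro α hα
    have hr := Psi_symz b α
    have h0 : coeff (Finsupp.equivFunOnFinite.symm α₀)
        (Psi b (symz K n α) - monomial (Finsupp.equivFunOnFinite.symm α) 1) = 0 :=
      hr _ (hmax α hα)
    rw [coeff_sub, sub_eq_zero] at h0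
    rw [h0, coeff_monomial]
    by_cases haa : α = α₀
    · subst haa
      rw [if_pos rfl, if_pos rfl]
    · rw [if_neg haa, if_neg]
      intro hcon
      exact haa (Finsupp.equivFunOnFinite.symm.injective hcon)
  have hsum : ∑ α ∈ c.support,
      coeff (Finsupp.equivFunOnFinite.symm α₀) (c α • Psi b (symz K n α))
      = ∑ α ∈ c.support, (if α = α₀ then c α else 0) := by
    apply Finset.sum_congr rfl
    intro α hα
    rw [MvPolynomial.coeff_smul, hval α hα, smul_eq_mul, mul_ite, mul_one, mul_zero]
  rw [hsum, Finset.sum_ite_eq' c.support α₀ (fun α => c α), if_pos hα₀s] at hco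
  exact (Finsupp.mem_support_iff.mp hα₀s) hco

end Symz

section Spanning

variable {K : Type} [Field K] [CharZero K] {n : ℕ} {L : Type} [LieRing L] [LieAlgebra K L]
variable (b : Module.Basis (Fin n) K L)

/-- words of length `< m` -/
def Wlt (K : Type) [Field K] (n m : ℕ) : Submodule K (FreeAlgebra K (Fin n)) :=
  Submodule.span K {x | ∃ l : List (Fin n), l.length < m ∧ x = wordProd K l}

lemma Jspan_mul_left (a z : FreeAlgebra K (Fin n)) (hz : z ∈ Jspan K n b) :
    a * z ∈ Jspan K n b := by
  have h : (Jspan K n b).map (LinearMap.mulLeft K a) ≤ Jspan K n b := by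
    rw [Jspan, Submodule.map_span, Submodule.span_le]
    rintro x ⟨y, ⟨P, Q, X, Y, rfl⟩, rfl⟩
    apply Submodule.subset_span
    exact ⟨a * P, Q, X, Y, by rw [LinearMap.mulLeft_apply]; noncomm_ring⟩
  exact h (Submodule.mem_map_of_mem hz)

lemma Wlt_mul_ι (i : Fin n) (m : ℕ) (z : FreeAlgebra K (Fin n)) (hz : z ∈ Wlt K n m) :
    FreeAlgebra.ι K i * z ∈ Wlt K n (m + 1) := by
  have h : (Wlt K n m).map (LinearMap.mulLeft K (FreeAlgebra.ι K i)) ≤ Wlt K n (m+1) := by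
    rw [Wlt, Submodule.map_span, Submodule.span_le]
    rintro x ⟨y, ⟨l, hl, rfl⟩, rfl⟩
    apply Submodule.subset_span
    refine ⟨i :: l, by simpa using hl, ?_⟩
    rw [LinearMap.mulLeft_apply, wordProd_cons]
  exact h (Submodule.mem_map_of_mem hz)

lemma emb_basis (i : Fin n) : emb K n b (b i) = FreeAlgebra.ι K i := by
  rw [emb, Module.Basis.repr_self]
  simp only [Finsupp.single_apply, ite_smul, one_smul, zero_smul]
  rw [Finset.sum_ite_eq Finset.univ i (fun k => FreeAlgebra.ι K k),
    if_pos (Finset.mem_univ i)]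

lemma emb_mul_word (x : L) (l : List (Fin n)) :
    emb K n b x * wordProd K l ∈ Wlt K n (l.length + 2) := by
  rw [emb, Finset.sum_mul]
  apply Submodule.sum_mem
  intro k _
  rw [smul_mul_assoc]
  apply Submodule.smul_mem
  apply Submodule.subset_span
  exact ⟨k :: l, by simp, (wordProd_cons k l).symm⟩

lemma perm_diff : ∀ {l l' : List (Fin n)}, l.Perm l' →
    wordProd K l - wordProd K l' ∈ Jspan K n b ⊔ Wlt K n l.length := by
  intro l l' h
  induction h with
  | nil =>
    rw [sub_self]
    exact Submodule.zero_mem _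
  | cons x h ih =>
    rename_i l₁ l₂ _
    rw [wordProd_cons, wordProd_cons, ← mul_sub]
    obtain ⟨u, hu, v, hv, huv⟩ := Submodule.mem_sup.mp ih
    rw [← huv, mul_add]
    apply Submodule.mem_sup.mpr
    exact ⟨FreeAlgebra.ι K x * u, Jspan_mul_left b _ _ hu,
      FreeAlgebra.ι K x * v, Wlt_mul_ι _ _ _ hv, rfl⟩
  | swap x y l =>
    set W := wordProd K l with hW
    set relg := emb K n b (b x) * emb K n b (b y) - emb K n b (b y) * emb K n b (b x)
      - emb K n b ⁅b x, b y⁆ with hrelg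
    have hgen : (-1 : FreeAlgebra K (Fin n)) * relg * W ∈ Jspan K n b :=
      Submodule.subset_span ⟨-1, W, b x, b y, rfl⟩
    have hbrk : emb K n b ⁅b x, b y⁆ * W ∈ Wlt K n (l.length + 2) :=
      emb_mul_word b _ l
    have heq : wordProd K (y :: x :: l) - wordProd K (x :: y :: l)
        = (-1 : FreeAlgebra K (Fin n)) * relg * W + (-(emb K n b ⁅b x, b y⁆ * W)) := by
      rw [wordProd_cons, wordProd_cons, wordProd_cons, wordProd_cons, ← hW, hrelg,
        emb_basis, emb_basis]
      noncomm_ring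
    rw [heq]
    apply Submodule.mem_sup.mpr
    refine ⟨_, hgen, _, Submodule.neg_mem _ (by simpa using hbrk), rfl⟩
  | trans h1 h2 ih1 ih2 =>
    rename_i l₁ l₂ l₃ _ _
    rw [← h1.length_eq] at ih2
    have := Submodule.add_mem _ ih1 ih2
    rw [sub_add_sub_cancel] at this
    exact this

/-- `symz α` agrees with the word product modulo `J` and lower length words -/
lemma symz_word_diff (α : Fin n → ℕ) :
    symz K n α - wordProd K (word n α)
      ∈ Jspan K n b ⊔ Wlt K n ((word n α).length) := by
  have hterm : ∀ σ : Equiv.Perm (Fin (word n α).length),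
      (List.ofFn fun j => FreeAlgebra.ι K ((word n α).get (σ j))).prod
        - wordProd K (word n α)
        ∈ Jspan K n b ⊔ Wlt K n ((word n α).length) := by
    intro σ
    have hw : (List.ofFn fun j => FreeAlgebra.ι K ((word n α).get (σ j))).prod
        = wordProd K (List.ofFn fun j => (word n α).get (σ j)) := by
      rw [wordProd, List.map_ofFn]
      rfl
    rw [hw]
    have h := perm_diff b (perm_word α σ)
    rw [List.length_ofFn] at h
    exact h
  have hne : (((word n α).length.factorial : ℕ) : K) ≠ 0 :=
    Nat.cast_ne_zero.mpr (Nat.factorial_ne_zero _)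
  have heq : symz K n α - wordProd K (word n α)
      = ((((word n α).length.factorial : ℕ) : K))⁻¹ •
        (∑ σ : Equiv.Perm (Fin (word n α).length),
          ((List.ofFn fun j => FreeAlgebra.ι K ((word n α).get (σ j))).prod
            - wordProd K (word n α))) := by
    rw [Finset.sum_sub_distrib, smul_sub, symz]
    congr 1
    rw [Finset.sum_const, Finset.card_univ, Fintype.card_perm, Fintype.card_fin]
    rw [← Nat.cast_smul_eq_nsmul K, ← smul_assoc, smul_eq_mul,
      inv_mul_cancel₀ hne, one_smul]
  rw [heq]
  exact Submodule.smul_mem _ _ (Submodule.sum_mem _ (fun σ _ => hterm σ))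

/-- every word product lies in the span of the symmetrized monomials mod `J` -/
lemma word_in_span : ∀ (m : ℕ) (l : List (Fin n)), l.length ≤ m →
    (Jspan K n b).mkQ (wordProd K l) ∈ Submodule.span K
      (Set.range fun α : Fin n → ℕ => (Jspan K n b).mkQ (symz K n α)) := by
  have step : ∀ l : List (Fin n),
      (∀ z ∈ Wlt K n l.length, (Jspan K n b).mkQ z ∈ Submodule.span K
        (Set.range fun α : Fin n → ℕ => (Jspan K n b).mkQ (symz K n α))) →
      (Jspan K n b).mkQ (wordProd K l) ∈ Submodule.span K
        (Set.range fun α : Fin n → ℕ => (Jspan K n b).mkQ (symz K n α)) := by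
    intro l hW
    set α : Fin n → ℕ := fun i => l.count i with hα
    have hperm : l.Perm (word n α) := by
      rw [List.perm_iff_count]
      intro a
      have h1 : (word n α).count a = cnt (word n α) a := (cnt_apply _ a).symm
      rw [h1, cnt_word]
      simp [Finsupp.equivFunOnFinite, hα]
      rfl
    have hlen : (word n α).length = l.length := hperm.length_eq.symm
    have h1 := perm_diff b hperm
    have h2 := symz_word_diff b α
    rw [hlen] at h2
    have h3 : wordProd K l - symz K n α ∈ Jspan K n b ⊔ Wlt K n l.length := by
      have := Submodule.sub_mem _ h1 h2
      rw [sub_sub_sub_cancel_right] at this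
      exact this
    obtain ⟨u, hu, v, hv, huv⟩ := Submodule.mem_sup.mp h3
    have hdecomp : wordProd K l = symz K n α + (u + v) := by
      rw [huv]
      abel
    rw [hdecomp, map_add, map_add]
    apply Submodule.add_mem
    · exact Submodule.subset_span (Set.mem_range_self α)
    · apply Submodule.add_mem
      · have h0 : (Jspan K n b).mkQ u = 0 := (Submodule.Quotient.mk_eq_zero _).mpr hu
        rw [h0]
        exact Submodule.zero_mem _
      · exact hW v hv
  intro m
  induction m with
  | zero =>
    intro l hl
    apply step l
    intro z hz
    have hl0 : l.length = 0 := by omega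
    rw [hl0] at hz
    have hempty : {x : FreeAlgebra K (Fin n) | ∃ l : List (Fin n),
        l.length < 0 ∧ x = wordProd K l} = ∅ := by
      ext x
      simp
    rw [Wlt, hempty, Submodule.span_empty, Submodule.mem_bot] at hz
    subst hz
    rw [map_zero]
    exact Submodule.zero_mem _
  | succ m ih =>
    intro l hl
    apply step l
    intro z hz
    refine Submodule.span_induction ?_ ?_ ?_ ?_ hz
    · rintro x ⟨l'', hl'', rfl⟩
      exact ih l'' (by omega)
    · rw [map_zero]; exact Submodule.zero_mem _
    · intro x y hx hy hpx hpy
      rw [map_add]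
      exact Submodule.add_mem _ hpx hpy
    · intro a x hx hpx
      rw [map_smul]
      exact Submodule.smul_mem _ _ hpx

end Spanning

section Final

variable {K : Type} [Field K] [CharZero K] {n : ℕ} {L : Type} [LieRing L] [LieAlgebra K L]
variable (b : Module.Basis (Fin n) K L)

/-- the free algebra is spanned by word products -/
lemma free_spanned_by_words (y : FreeAlgebra K (Fin n)) :
    y ∈ Submodule.span K (Set.range (wordProd K (n := n))) := by
  set SW := Submodule.span K (Set.range (wordProd K (n := n))) with hSW
  induction y using FreeAlgebra.induction with
  | grade0 r =>
    have : algebraMap K (FreeAlgebra K (Fin n)) r = r • wordProd K [] := by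
      rw [wordProd_nil, Algebra.algebraMap_eq_smul_one]
    rw [this]
    exact Submodule.smul_mem _ _ (Submodule.subset_span ⟨[], rfl⟩)
  | grade1 x =>
    have : FreeAlgebra.ι K x = wordProd K [x] := by
      rw [wordProd, List.map_cons, List.map_nil, List.prod_cons, List.prod_nil, mul_one]
    rw [this]
    exact Submodule.subset_span ⟨[x], rfl⟩
  | mul a c ha hc =>
    refine Submodule.span_induction ?_ ?_ ?_ ?_ ha
    · rintro x ⟨l, rfl⟩
      refine Submodule.span_induction ?_ ?_ ?_ ?_ hc
      · rintro z ⟨l', rfl⟩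
        rw [← wordProd_append]
        exact Submodule.subset_span ⟨l ++ l', rfl⟩
      · rw [mul_zero]; exact Submodule.zero_mem _
      · intro u v hu hv hpu hpv
        rw [mul_add]
        exact Submodule.add_mem _ hpu hpv
      · intro a' u hu hpu
        rw [mul_smul_comm]
        exact Submodule.smul_mem _ _ hpu
    · rw [zero_mul]; exact Submodule.zero_mem _
    · intro u v hu hv hpu hpv
      rw [add_mul]
      exact Submodule.add_mem _ hpu hpv
    · intro a' u hu hpu
      rw [smul_mul_assoc]
      exact Submodule.smul_mem _ _ hpu
  | add a c ha hc =>
    exact Submodule.add_mem _ ha hc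

/-- spanning half of PBW -/
theorem span_symz :
    Submodule.span K
      (Set.range fun α : Fin n → ℕ => (Jspan K n b).mkQ (symz K n α)) = ⊤ := by
  rw [eq_top_iff]
  intro x _
  obtain ⟨y, rfl⟩ := Submodule.mkQ_surjective (Jspan K n b) x
  have hy := free_spanned_by_words y
  refine Submodule.span_induction ?_ ?_ ?_ ?_ hy
  · rintro z ⟨l, rfl⟩
    exact word_in_span b l.length l le_rfl
  · rw [map_zero]; exact Submodule.zero_mem _
  · intro u v hu hv hpu hpv
    rw [map_add]
    exact Submodule.add_mem _ hpu hpv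
  · intro a u hu hpu
    rw [map_smul]
    exact Submodule.smul_mem _ _ hpu

end Final


theorem pbw_symmetrized_monomials_basis (K : Type) [Field K] [CharZero K]
    (n : ℕ) (L : Type) [LieRing L] [LieAlgebra K L] (b : Module.Basis (Fin n) K L) :
    LinearIndependent K
        (fun α : Fin n → ℕ => (Jspan K n b).mkQ (symz K n α)) ∧
      Submodule.span K
          (Set.range fun α : Fin n → ℕ => (Jspan K n b).mkQ (symz K n α)) = ⊤ := by
  exact ⟨indep_symz b, span_symz b⟩

end
end

section
/- (Poincaré–Birkhoff–Witt, ordered monomial form) Let L be a Lie algebra over a field K of characteristic zero with basis X₁,…,Xₙ. The ordered monomials X₁^{α₁}X₂^{α₂}⋯Xₙ^{αₙ}, over all n-tuples (α₁,…,αₙ) of nonnegative integers, form a K-vector-space basis of the universal enveloping algebra U(L). -/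
open scoped BigOperators

noncomputable section

namespace PBW
variable {K : Type} [Field K] {n : ℕ} {L : Type} [LieRing L] [LieAlgebra K L]

def deg (α : Fin n →₀ ℕ) : ℕ := α.sum fun _ v => v

lemma deg_add (α β : Fin n →₀ ℕ) : deg (α + β) = deg α + deg β :=
  Finsupp.sum_add_index' (fun _ => rfl) (fun _ _ _ => rfl)

lemma deg_single (i : Fin n) (c : ℕ) : deg (Finsupp.single i c) = c :=
  Finsupp.sum_single_index rfl

lemma deg_eq_zero {α : Fin n →₀ ℕ} (h : deg α = 0) : α = 0 := by
  ext k
  simp only [Finsupp.coe_zero, Pi.zero_apply]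
  by_contra hk
  have hks : k ∈ α.support := Finsupp.mem_support_iff.2 (by simpa using hk)
  have : α k ≤ deg α := by
    unfold deg
    rw [Finsupp.sum]
    exact Finset.single_le_sum (fun _ _ => Nat.zero_le _) hks
  omega

def hF (b : Module.Basis (Fin n) K L) : ℕ → Fin n → (Fin n →₀ ℕ) → ((Fin n →₀ ℕ) →₀ K)
  | 0, i, α => Finsupp.single (α + Finsupp.single i 1) 1
  | (m+1), i, α =>
    if hα : ∀ k ∈ α.support, i ≤ k then Finsupp.single (α + Finsupp.single i 1) 1
    else
      let j := α.support.min' (by push_neg at hα; exact ⟨hα.choose, hα.choose_spec.1⟩)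
      let β := α - Finsupp.single j 1
      Finsupp.single (α + Finsupp.single i 1) 1
        + (hF b m i β - Finsupp.single (β + Finsupp.single i 1) 1).sum (fun γ c => c • hF b m j γ)
        + (b.repr ⁅b i, b j⁆).sum fun k c => c • hF b m k β

def D (K : Type) [Field K] (n d : ℕ) : Submodule K ((Fin n →₀ ℕ) →₀ K) :=
  Finsupp.supported K K {γ | deg γ ≤ d}

lemma D_mono {d d' : ℕ} (h : d ≤ d') : D K n d ≤ D K n d' :=
  Finsupp.supported_mono (fun γ hγ => le_trans hγ h)

lemma single_mem_D {γ : Fin n →₀ ℕ} {d : ℕ} (h : deg γ ≤ d) (c : K) :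
    Finsupp.single γ c ∈ D K n d :=
  Finsupp.single_mem_supported K c h

lemma mem_D_iff {p : (Fin n →₀ ℕ) →₀ K} {d : ℕ} :
    p ∈ D K n d ↔ ∀ γ ∈ p.support, deg γ ≤ d := by
  rw [D, Finsupp.mem_supported]
  exact ⟨fun h γ hγ => h hγ, fun h γ hγ => h γ hγ⟩

lemma sum_mem_D {ι : Type*} {Z : Type*} [Zero Z] {p : ι →₀ Z}
    {g : ι → Z → ((Fin n →₀ ℕ) →₀ K)} {d : ℕ}
    (h : ∀ γ ∈ p.support, g γ (p γ) ∈ D K n d) : p.sum g ∈ D K n d :=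
  Submodule.sum_mem _ h

variable (b : Module.Basis (Fin n) K L)

lemma hF_ordered (m : ℕ) (i : Fin n) (α : Fin n →₀ ℕ) (h : ∀ k ∈ α.support, i ≤ k) :
    hF b m i α = Finsupp.single (α + Finsupp.single i 1) 1 := by
  cases m with
  | zero => rfl
  | succ m => rw [hF, dif_pos h]

lemma hF_unordered (m : ℕ) (i : Fin n) (α : Fin n →₀ ℕ) (h : ¬ ∀ k ∈ α.support, i ≤ k)
    (hne : α.support.Nonempty) :
    hF b (m+1) i α =
      Finsupp.single (α + Finsupp.single i 1) 1
        + (hF b m i (α - Finsupp.single (α.support.min' hne) 1)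
            - Finsupp.single ((α - Finsupp.single (α.support.min' hne) 1) + Finsupp.single i 1) 1).sum
            (fun γ c => c • hF b m (α.support.min' hne) γ)
        + (b.repr ⁅b i, b (α.support.min' hne)⁆).sum
            (fun k c => c • hF b m k (α - Finsupp.single (α.support.min' hne) 1)) := by
  rw [hF, dif_neg h]

lemma degBound : ∀ (m : ℕ) (i : Fin n) (α : Fin n →₀ ℕ), deg α ≤ m →
    hF b m i α - Finsupp.single (α + Finsupp.single i 1) 1 ∈ D K n (deg α) := by
  intro m
  induction m with
  | zero =>
    intro i α h
    have : α = 0 := deg_eq_zero (Nat.le_zero.mp h)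
    subst this
    rw [hF]
    simp only [sub_self]
    exact Submodule.zero_mem _
  | succ m ih =>
    intro i α h
    by_cases hα : ∀ k ∈ α.support, i ≤ k
    · rw [hF_ordered b _ _ _ hα, sub_self]; exact Submodule.zero_mem _
    · have hne : α.support.Nonempty := by
        push_neg at hα; exact ⟨hα.choose, hα.choose_spec.1⟩
      set j := α.support.min' hne with hj
      set β := α - Finsupp.single j 1 with hβ
      have hjα : j ∈ α.support := α.support.min'_mem hne
      have hβα : β + Finsupp.single j 1 = α := by
        rw [hβ]
        exact tsub_add_cancel_of_le (Finsupp.single_le_iff.2 (Nat.one_le_iff_ne_zero.2 (Finsupp.mem_support_iff.1 hjα)))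
      have hdeg : deg β + 1 = deg α := by
        rw [← hβα, deg_add, deg_single]
      have hβm : deg β ≤ m := by omega
      rw [hF_unordered b m i α hα hne]
      have e1 : Finsupp.single (α + Finsupp.single i 1) (1:K)
          + (hF b m i β - Finsupp.single (β + Finsupp.single i 1) 1).sum (fun γ c => c • hF b m j γ)
          + (b.repr ⁅b i, b j⁆).sum (fun k c => c • hF b m k β)
          - Finsupp.single (α + Finsupp.single i 1) 1
          = (hF b m i β - Finsupp.single (β + Finsupp.single i 1) 1).sum (fun γ c => c • hF b m j γ)
          + (b.repr ⁅b i, b j⁆).sum (fun k c => c • hF b m k β) := by abel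
      rw [e1]
      have hq : hF b m i β - Finsupp.single (β + Finsupp.single i 1) 1 ∈ D K n (deg β) :=
        ih i β hβm
      have hFmem : ∀ (k : Fin n) (γ : Fin n →₀ ℕ), deg γ ≤ m → hF b m k γ ∈ D K n (deg γ + 1) := by
        intro k γ hγ
        have := ih k γ hγ
        have h2 : Finsupp.single (γ + Finsupp.single k 1) (1:K) ∈ D K n (deg γ + 1) :=
          single_mem_D (by rw [deg_add, deg_single]) 1
        have := Submodule.add_mem _ (D_mono (Nat.le_succ _) this) h2
        simpa using this
      apply Submodule.add_mem
      · apply sum_mem_D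
        intro γ hγ
        have hγd : deg γ ≤ deg β := (mem_D_iff.1 hq) γ hγ
        apply Submodule.smul_mem
        have := hFmem j γ (le_trans hγd hβm)
        refine D_mono ?_ this
        omega
      · apply sum_mem_D
        intro k _
        apply Submodule.smul_mem
        have := hFmem k β hβm
        refine D_mono ?_ this
        omega

lemma hF_mem (m : ℕ) (i : Fin n) (α : Fin n →₀ ℕ) (h : deg α ≤ m) :
    hF b m i α ∈ D K n (deg α + 1) := by
  have h1 := degBound b m i α h
  have h2 : Finsupp.single (α + Finsupp.single i 1) (1:K) ∈ D K n (deg α + 1) :=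
    single_mem_D (by rw [deg_add, deg_single]) 1
  have := Submodule.add_mem _ (D_mono (Nat.le_succ _) h1) h2
  simpa using this

lemma hF_stable : ∀ (m : ℕ) (i : Fin n) (α : Fin n →₀ ℕ), deg α ≤ m →
    hF b (m+1) i α = hF b m i α := by
  intro m
  induction m with
  | zero =>
    intro i α h
    have : α = 0 := deg_eq_zero (Nat.le_zero.mp h)
    subst this
    rw [hF_ordered b _ _ _ (by simp), hF]
  | succ m ih =>
    intro i α h
    by_cases hα : ∀ k ∈ α.support, i ≤ k
    · rw [hF_ordered b _ _ _ hα, hF_ordered b _ _ _ hα]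
    · have hne : α.support.Nonempty := by
        push_neg at hα; exact ⟨hα.choose, hα.choose_spec.1⟩
      set j := α.support.min' hne with hj
      set β := α - Finsupp.single j 1 with hβ
      have hjα : j ∈ α.support := α.support.min'_mem hne
      have hβα : β + Finsupp.single j 1 = α := by
        rw [hβ]
        exact tsub_add_cancel_of_le (Finsupp.single_le_iff.2 (Nat.one_le_iff_ne_zero.2 (Finsupp.mem_support_iff.1 hjα)))
      have hdeg : deg β + 1 = deg α := by rw [← hβα, deg_add, deg_single]
      have hβm : deg β ≤ m := by omega
      rw [hF_unordered b (m+1) i α hα hne, hF_unordered b m i α hα hne]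
      rw [ih i β hβm]
      congr 1
      · congr 1
        apply Finsupp.sum_congr
        intro γ hγ
        have hγd : deg γ ≤ deg β := by
          have hq : hF b m i β - Finsupp.single (β + Finsupp.single i 1) 1 ∈ D K n (deg β) :=
            degBound b m i β hβm
          exact (mem_D_iff.1 hq) γ hγ
        rw [ih j γ (le_trans hγd hβm)]
      · apply Finsupp.sum_congr
        intro k _
        rw [ih k β hβm]

lemma hF_stable' (m : ℕ) (i : Fin n) (α : Fin n →₀ ℕ) (h : deg α ≤ m) :
    hF b m i α = hF b (deg α) i α := by
  induction m with
  | zero => rw [Nat.le_zero.mp h]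
  | succ m ih =>
    rcases Nat.lt_or_ge (deg α) (m+1) with h' | h'
    · rw [hF_stable b m i α (by omega), ih (by omega)]
    · have : deg α = m + 1 := by omega
      rw [this]

/-- stable value of the operator on a monomial -/
def fop (i : Fin n) (α : Fin n →₀ ℕ) : (Fin n →₀ ℕ) →₀ K := hF b (deg α) i α

/-- the operator attached to generator `i`, as a linear map -/
def Fi (i : Fin n) : ((Fin n →₀ ℕ) →₀ K) →ₗ[K] ((Fin n →₀ ℕ) →₀ K) :=
  Finsupp.linearCombination K (fop b i)

/-- the operator attached to a general element of `L` -/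
def FL : L →ₗ[K] (((Fin n →₀ ℕ) →₀ K) →ₗ[K] ((Fin n →₀ ℕ) →₀ K)) :=
  (Finsupp.linearCombination K (Fi b)).comp (b.repr : L →ₗ[K] (Fin n →₀ K))

lemma FL_basis (i : Fin n) : FL b (b i) = Fi b i := by
  rw [FL]
  simp [b.repr_self]

lemma Fi_single (i : Fin n) (γ : Fin n →₀ ℕ) (c : K) :
    Fi b i (Finsupp.single γ c) = c • fop b i γ :=
  Finsupp.linearCombination_single K c γ

lemma Fi_single_one (i : Fin n) (γ : Fin n →₀ ℕ) :
    Fi b i (Finsupp.single γ 1) = fop b i γ := by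
  rw [Fi_single, one_smul]

lemma FL_apply (z : L) (p : (Fin n →₀ ℕ) →₀ K) :
    FL b z p = (b.repr z).sum fun k a => a • Fi b k p := by
  rw [FL]
  simp only [LinearMap.coe_comp, Function.comp_apply, LinearEquiv.coe_coe]
  rw [Finsupp.linearCombination_apply, Finsupp.sum, Finsupp.sum, LinearMap.sum_apply]
  simp [LinearMap.smul_apply]

lemma fop_ordered (i : Fin n) (γ : Fin n →₀ ℕ) (h : ∀ k ∈ γ.support, i ≤ k) :
    fop b i γ = Finsupp.single (γ + Finsupp.single i 1) 1 := hF_ordered b _ _ _ h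

lemma Fi_ordered (i : Fin n) (γ : Fin n →₀ ℕ) (h : ∀ k ∈ γ.support, i ≤ k) :
    Fi b i (Finsupp.single γ 1) = Finsupp.single (γ + Finsupp.single i 1) 1 := by
  rw [Fi_single_one, fop_ordered b i γ h]

lemma fop_sub_mem (i : Fin n) (γ : Fin n →₀ ℕ) :
    fop b i γ - Finsupp.single (γ + Finsupp.single i 1) 1 ∈ D K n (deg γ) :=
  degBound b _ i γ le_rfl

lemma fop_mem (i : Fin n) (γ : Fin n →₀ ℕ) : fop b i γ ∈ D K n (deg γ + 1) :=
  hF_mem b _ i γ le_rfl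

lemma Fi_mem (i : Fin n) {p : (Fin n →₀ ℕ) →₀ K} {d : ℕ} (hp : p ∈ D K n d) :
    Fi b i p ∈ D K n (d + 1) := by
  rw [Fi, Finsupp.linearCombination_apply]
  apply sum_mem_D
  intro γ hγ
  apply Submodule.smul_mem
  exact D_mono (by have := mem_D_iff.1 hp γ hγ; omega) (fop_mem b i γ)

lemma FL_mem (z : L) {p : (Fin n →₀ ℕ) →₀ K} {d : ℕ} (hp : p ∈ D K n d) :
    FL b z p ∈ D K n (d + 1) := by
  rw [FL_apply]
  apply sum_mem_D
  intro k _
  exact Submodule.smul_mem _ _ (Fi_mem b k hp)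

lemma fdef (i : Fin n) (γ : Fin n →₀ ℕ) (hα : ¬ ∀ k ∈ γ.support, i ≤ k)
    (hne : γ.support.Nonempty) :
    fop b i γ = Finsupp.single (γ + Finsupp.single i 1) 1
      + Fi b (γ.support.min' hne)
          (fop b i (γ - Finsupp.single (γ.support.min' hne) 1)
            - Finsupp.single ((γ - Finsupp.single (γ.support.min' hne) 1) + Finsupp.single i 1) 1)
      + FL b ⁅b i, b (γ.support.min' hne)⁆
          (Finsupp.single (γ - Finsupp.single (γ.support.min' hne) 1) 1) := by
  set j := γ.support.min' hne with hj
  set β := γ - Finsupp.single j 1 with hβ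
  have hjγ : j ∈ γ.support := γ.support.min'_mem hne
  have hβγ : β + Finsupp.single j 1 = γ := by
    rw [hβ]
    exact tsub_add_cancel_of_le (Finsupp.single_le_iff.2 (Nat.one_le_iff_ne_zero.2 (Finsupp.mem_support_iff.1 hjγ)))
  have hdeg : deg β + 1 = deg γ := by rw [← hβγ, deg_add, deg_single]
  have h1 : fop b i γ = hF b (deg β + 1) i γ := by rw [fop, hdeg]
  rw [h1, hF_unordered b (deg β) i γ hα hne, ← hj, ← hβ]
  congr 1
  · congr 1
    have hq : hF b (deg β) i β - Finsupp.single (β + Finsupp.single i 1) 1 ∈ D K n (deg β) :=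
      degBound b _ i β le_rfl
    have hfeq : hF b (deg β) i β = fop b i β := rfl
    rw [hfeq] at hq ⊢
    rw [Fi, Finsupp.linearCombination_apply]
    apply Finsupp.sum_congr
    intro γ' hγ'
    have : deg γ' ≤ deg β := mem_D_iff.1 hq γ' hγ'
    rw [hF_stable' b (deg β) j γ' this]
    rfl
  · rw [FL_apply]
    apply Finsupp.sum_congr
    intro k _
    rw [Fi_single_one]
    rfl

lemma supp_add_single (γ : Fin n →₀ ℕ) (k t : Fin n) :
    t ∈ (γ + Finsupp.single k 1).support ↔ t ∈ γ.support ∨ t = k := by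
  simp only [Finsupp.mem_support_iff, Finsupp.add_apply, Finsupp.single_apply]
  rcases eq_or_ne k t with h | h
  · subst h
    simp
  · rw [if_neg h]
    constructor
    · intro hh
      left
      omega
    · rintro (hh | hh)
      · omega
      · exact absurd hh.symm h

lemma min'_add_single (γ : Fin n →₀ ℕ) (k : Fin n) (hk : ∀ t ∈ γ.support, k ≤ t)
    (hne : (γ + Finsupp.single k 1).support.Nonempty) :
    (γ + Finsupp.single k 1).support.min' hne = k := by
  apply le_antisymm
  · apply Finset.min'_le
    rw [supp_add_single]
    right; rfl
  · apply Finset.le_min'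
    intro t ht
    rcases (supp_add_single γ k t).1 ht with h | h
    · exact hk t h
    · omega

/-- the "ordered" commutator case: no induction needed -/
lemma C0 (i k : Fin n) (γ : Fin n →₀ ℕ) (hki : k < i) (hord : ∀ t ∈ γ.support, k ≤ t) :
    Fi b i (Fi b k (Finsupp.single γ 1)) - Fi b k (Fi b i (Finsupp.single γ 1))
      = FL b ⁅b i, b k⁆ (Finsupp.single γ 1) := by
  have hFk : Fi b k (Finsupp.single γ (1:K)) = Finsupp.single (γ + Finsupp.single k 1) 1 :=
    Fi_ordered b k γ hord
  set γ' := γ + Finsupp.single k 1 with hγ'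
  have hkγ' : k ∈ γ'.support := by rw [supp_add_single]; right; rfl
  have hne : γ'.support.Nonempty := ⟨k, hkγ'⟩
  have hnord : ¬ ∀ t ∈ γ'.support, i ≤ t := by
    intro hcon
    exact absurd (hcon k hkγ') (not_le.2 hki)
  have hmin : γ'.support.min' hne = k := min'_add_single γ k hord hne
  have hβ : γ' - Finsupp.single k 1 = γ := by
    ext t
    simp [hγ', Finsupp.tsub_apply]
  have hd := fdef b i γ' hnord hne
  rw [hmin, hβ] at hd
  rw [hFk, Fi_single_one, hd]
  have hordi : ∀ t ∈ (γ + Finsupp.single i 1).support, k ≤ t := by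
    intro t ht
    rcases (supp_add_single γ i t).1 ht with h | h
    · exact hord t h
    · omega
  have hcomm : γ' + Finsupp.single i 1 = (γ + Finsupp.single i 1) + Finsupp.single k 1 := by
    rw [hγ']
    abel
  rw [map_sub, Fi_single_one b i, Fi_ordered b k _ hordi, ← hcomm]
  abel

/-- the commutation statement at degree `d` -/
def GHstmt (d : ℕ) : Prop :=
  ∀ (X Y : L) (p : (Fin n →₀ ℕ) →₀ K), p ∈ D K n d →
    FL b X (FL b Y p) - FL b Y (FL b X p) = FL b ⁅X, Y⁆ p

lemma GH : ∀ d : ℕ, GHstmt b d := by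
  intro d
  induction d using Nat.strong_induction_on with
  | _ d IH =>
  have core : ∀ (i k : Fin n) (γ : Fin n →₀ ℕ), deg γ ≤ d → k < i →
      Fi b i (Fi b k (Finsupp.single γ 1)) - Fi b k (Fi b i (Finsupp.single γ 1))
        = FL b ⁅b i, b k⁆ (Finsupp.single γ 1) := by
    intro i k γ hγd hki
    by_cases hord : ∀ t ∈ γ.support, k ≤ t
    · exact C0 b i k γ hki hord
    · have hne : γ.support.Nonempty := by
        push_neg at hord; exact ⟨hord.choose, hord.choose_spec.1⟩
      set j := γ.support.min' hne with hj
      set β := γ - Finsupp.single j 1 with hβ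
      have hjγ : j ∈ γ.support := γ.support.min'_mem hne
      have hβγ : β + Finsupp.single j 1 = γ := by
        rw [hβ]
        exact tsub_add_cancel_of_le
          (Finsupp.single_le_iff.2 (Nat.one_le_iff_ne_zero.2 (Finsupp.mem_support_iff.1 hjγ)))
      have hjk : j < k := by
        push_neg at hord
        obtain ⟨t, ht, htk⟩ := hord
        exact lt_of_le_of_lt (by rw [hj]; exact Finset.min'_le _ t ht) htk
      have hji : j < i := hjk.trans hki
      have hdeg : deg β + 1 = deg γ := by rw [← hβγ, deg_add, deg_single]
      have hβd : deg β < d := by omega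
      have IHβ : GHstmt b (deg β) := IH _ hβd
      have hxβ : Finsupp.single β (1:K) ∈ D K n (deg β) := single_mem_D le_rfl 1
      have hsupβ : ∀ t ∈ β.support, j ≤ t := by
        intro t ht
        rw [hj]
        exact Finset.min'_le _ t (Finsupp.support_tsub ht)
      -- Step A : peel off the minimal letter
      have stepA : ∀ s : Fin n, j < s →
          Fi b s (Finsupp.single γ 1)
            = Fi b j (Fi b s (Finsupp.single β 1)) + FL b ⁅b s, b j⁆ (Finsupp.single β 1) := by
        intro s hjs
        have hnords : ¬ ∀ t ∈ γ.support, s ≤ t := fun hcon => absurd (hcon j hjγ) (not_le.2 hjs)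
        have hd := fdef b s γ hnords hne
        rw [← hj, ← hβ] at hd
        have hordj : ∀ t ∈ (β + Finsupp.single s 1).support, j ≤ t := by
          intro t ht
          rcases (supp_add_single β s t).1 ht with h | h
          · exact hsupβ t h
          · omega
        rw [Fi_single_one, hd, map_sub, Fi_single_one b s, Fi_ordered b j _ hordj]
        have hcomm : γ + Finsupp.single s 1 = (β + Finsupp.single s 1) + Finsupp.single j 1 := by
          rw [← hβγ]; abel
        rw [hcomm]
        abel
      -- commuting (s, j) past Fi b s' xβ
      have commq : ∀ s s' : Fin n, j < s → j < s' →
          Fi b s (Fi b j (Fi b s' (Finsupp.single β 1)))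
            = Fi b j (Fi b s (Fi b s' (Finsupp.single β 1)))
              + FL b ⁅b s, b j⁆ (Fi b s' (Finsupp.single β 1)) := by
        intro s s' hjs hjs'
        have hordj : ∀ t ∈ (β + Finsupp.single s' 1).support, j ≤ t := by
          intro t ht
          rcases (supp_add_single β s' t).1 ht with h | h
          · exact hsupβ t h
          · omega
        have hsingle := C0 b s j (β + Finsupp.single s' 1) hjs hordj
        have hw := IHβ (b s) (b j) (fop b s' β - Finsupp.single (β + Finsupp.single s' 1) 1)
          (fop_sub_mem b s' β)
        rw [FL_basis, FL_basis] at hw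
        have hsplit : Fi b s' (Finsupp.single β (1:K))
            = Finsupp.single (β + Finsupp.single s' 1) 1
              + (fop b s' β - Finsupp.single (β + Finsupp.single s' 1) 1) := by
          rw [Fi_single_one]; abel
        rw [hsplit]
        simp only [map_add]
        have h1 : Fi b s (Fi b j (Finsupp.single (β + Finsupp.single s' 1) (1:K)))
            = Fi b j (Fi b s (Finsupp.single (β + Finsupp.single s' 1) 1))
              + FL b ⁅b s, b j⁆ (Finsupp.single (β + Finsupp.single s' 1) 1) := by
          rw [← hsingle]; abel
        have h2 : Fi b s (Fi b j (fop b s' β - Finsupp.single (β + Finsupp.single s' 1) 1))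
            = Fi b j (Fi b s (fop b s' β - Finsupp.single (β + Finsupp.single s' 1) 1))
              + FL b ⁅b s, b j⁆ (fop b s' β - Finsupp.single (β + Finsupp.single s' 1) 1) := by
          rw [← hw]; abel
        rw [h1, h2]
        abel
      -- the lie-element commutators at degree deg β
      have commlie : ∀ (s : Fin n) (Z : L),
          Fi b s (FL b Z (Finsupp.single β 1))
            = FL b Z (Fi b s (Finsupp.single β 1)) + FL b ⁅b s, Z⁆ (Finsupp.single β 1) := by
        intro s Z
        have := IHβ (b s) Z (Finsupp.single β 1) hxβ
        rw [FL_basis] at this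
        rw [← this]; abel
      have c3 : Fi b i (Fi b k (Finsupp.single β 1))
          = Fi b k (Fi b i (Finsupp.single β 1)) + FL b ⁅b i, b k⁆ (Finsupp.single β 1) := by
        have := IHβ (b i) (b k) (Finsupp.single β 1) hxβ
        rw [FL_basis, FL_basis] at this
        rw [← this]; abel
      have hγβ : Finsupp.single γ (1:K) = Fi b j (Finsupp.single β 1) := by
        rw [Fi_ordered b j β hsupβ, hβγ]
      have c4 : FL b ⁅b i, b k⁆ (Finsupp.single γ 1)
          = Fi b j (FL b ⁅b i, b k⁆ (Finsupp.single β 1))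
            + FL b ⁅⁅b i, b k⁆, b j⁆ (Finsupp.single β 1) := by
        have := IHβ ⁅b i, b k⁆ (b j) (Finsupp.single β 1) hxβ
        rw [FL_basis] at this
        rw [hγβ, ← this]; abel
      have jacobi : (⁅b i, ⁅b k, b j⁆⁆ : L) = ⁅⁅b i, b k⁆, b j⁆ + ⁅b k, ⁅b i, b j⁆⁆ :=
        leibniz_lie (b i) (b k) (b j)
      -- assemble
      rw [stepA k hjk, stepA i hji, map_add, map_add,
        commq i k hji hjk, commq k i hjk hji,
        commlie i ⁅b k, b j⁆, commlie k ⁅b i, b j⁆, c3, c4]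
      rw [map_add (Fi b j), jacobi, map_add (FL b), LinearMap.add_apply]
      abel
  -- extend from the core to all pairs of basis indices
  have key : ∀ (i k : Fin n) (γ : Fin n →₀ ℕ), deg γ ≤ d →
      Fi b i (Fi b k (Finsupp.single γ 1)) - Fi b k (Fi b i (Finsupp.single γ 1))
        = FL b ⁅b i, b k⁆ (Finsupp.single γ 1) := by
    intro i k γ h
    rcases lt_trichotomy k i with hki | heq | hik
    · exact core i k γ h hki
    · subst heq
      simp [lie_self]
    · have hcore := core k i γ h hik
      have hskew : (⁅b i, b k⁆ : L) = -⁅b k, b i⁆ := (lie_skew (b i) (b k)).symm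
      rw [hskew, map_neg, LinearMap.neg_apply, ← hcore]
      abel
  -- extend to general X at basis k
  have step1 : ∀ (X : L) (k : Fin n) (γ : Fin n →₀ ℕ), deg γ ≤ d →
      FL b X (Fi b k (Finsupp.single γ 1)) - Fi b k (FL b X (Finsupp.single γ 1))
        = FL b ⁅X, b k⁆ (Finsupp.single γ 1) := by
    intro X k γ h
    have hX : X ∈ Submodule.span K (Set.range b) := by rw [b.span_eq]; trivial
    induction hX using Submodule.span_induction with
    | mem x hx =>
      obtain ⟨i, rfl⟩ := hx
      rw [FL_basis]
      exact key i k γ h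
    | zero => simp
    | add x y hx hy ihx ihy =>
      simp only [map_add, LinearMap.add_apply, add_lie]
      rw [← ihx, ← ihy]
      abel
    | smul a x hx ihx =>
      simp only [map_smul, LinearMap.smul_apply, smul_lie, map_smul]
      rw [← ihx]
      rw [smul_sub]
  -- extend to general Y
  have step2 : ∀ (X Y : L) (γ : Fin n →₀ ℕ), deg γ ≤ d →
      FL b X (FL b Y (Finsupp.single γ 1)) - FL b Y (FL b X (Finsupp.single γ 1))
        = FL b ⁅X, Y⁆ (Finsupp.single γ 1) := by
    intro X Y γ h
    have hY : Y ∈ Submodule.span K (Set.range b) := by rw [b.span_eq]; trivial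
    induction hY using Submodule.span_induction with
    | mem y hy =>
      obtain ⟨k, rfl⟩ := hy
      rw [FL_basis]
      exact step1 X k γ h
    | zero => simp
    | add x y hx hy ihx ihy =>
      simp only [map_add, LinearMap.add_apply, lie_add]
      rw [← ihx, ← ihy]
      abel
    | smul a x hx ihx =>
      simp only [map_smul, LinearMap.smul_apply, lie_smul, map_smul]
      rw [← ihx]
      rw [smul_sub]
  -- extend to all of D d
  intro X Y p hp
  rw [D, Finsupp.supported_eq_span_single] at hp
  induction hp using Submodule.span_induction with
  | mem x hx =>
    obtain ⟨γ, hγ, rfl⟩ := hx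
    exact step2 X Y γ hγ
  | zero => simp
  | add x y hx hy ihx ihy =>
    simp only [map_add]
    rw [← ihx, ← ihy]
    abel
  | smul a x hx ihx =>
    simp only [map_smul]
    rw [← ihx]
    rw [smul_sub]

lemma GHall (X Y : L) (p : (Fin n →₀ ℕ) →₀ K) :
    FL b X (FL b Y p) - FL b Y (FL b X p) = FL b ⁅X, Y⁆ p := by
  apply GH b (p.support.sup deg) X Y p
  rw [mem_D_iff]
  intro γ hγ
  exact Finset.le_sup hγ

/-- the representation of the free algebra on polynomials -/
def rho : FreeAlgebra K (Fin n) →ₐ[K] Module.End K ((Fin n →₀ ℕ) →₀ K) :=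
  FreeAlgebra.lift K (Fi b)

lemma rho_iota (i : Fin n) : rho b (FreeAlgebra.ι K i) = Fi b i := by
  rw [rho, FreeAlgebra.lift_ι_apply]

def emb' (x : L) : FreeAlgebra K (Fin n) := ∑ k, b.repr x k • FreeAlgebra.ι K k

lemma rho_emb (X : L) : rho b (emb' b X) = FL b X := by
  rw [emb', map_sum]
  simp only [map_smul, rho_iota]
  rw [FL]
  simp only [LinearMap.coe_comp, Function.comp_apply, LinearEquiv.coe_coe]
  rw [Finsupp.linearCombination_apply, Finsupp.sum_fintype]
  intro k
  exact zero_smul K _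

lemma rho_mid (X Y : L) :
    rho b (emb' b X * emb' b Y - emb' b Y * emb' b X - emb' b ⁅X, Y⁆) = 0 := by
  rw [map_sub, map_sub, map_mul, map_mul, rho_emb, rho_emb, rho_emb]
  apply LinearMap.ext
  intro p
  simp only [LinearMap.sub_apply, Module.End.mul_apply, LinearMap.zero_apply]
  rw [sub_eq_zero, ← GHall b X Y p]

/-- evaluation of the representation at the constant polynomial 1 -/
def Psi : FreeAlgebra K (Fin n) →ₗ[K] ((Fin n →₀ ℕ) →₀ K) :=
  (LinearMap.applyₗ (Finsupp.single 0 1)).comp (rho b).toLinearMap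

lemma Psi_apply (x : FreeAlgebra K (Fin n)) : Psi b x = rho b x (Finsupp.single 0 1) := rfl

lemma rho_prodl_apply (l : List (Fin n)) (p : (Fin n →₀ ℕ) →₀ K) :
    rho b ((l.map (FreeAlgebra.ι K)).prod) p = l.foldr (fun i q => Fi b i q) p := by
  induction l with
  | nil =>
    simp only [List.map_nil, List.prod_nil, map_one, List.foldr_nil]
    rfl
  | cons i t ih =>
    simp only [List.map_cons, List.prod_cons, map_mul, Module.End.mul_apply, List.foldr_cons]
    rw [ih, rho_iota]

def countM (l : List (Fin n)) : Fin n →₀ ℕ := (l.map fun i => Finsupp.single i 1).sum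

lemma countM_nil : countM ([] : List (Fin n)) = 0 := rfl

lemma countM_cons (i : Fin n) (t : List (Fin n)) :
    countM (i :: t) = Finsupp.single i 1 + countM t := by
  rw [countM, List.map_cons, List.sum_cons, countM]

lemma countM_apply (l : List (Fin n)) (k : Fin n) : countM l k = l.count k := by
  induction l with
  | nil => simp [countM_nil]
  | cons i t ih =>
    rw [countM_cons, List.count_cons, Finsupp.add_apply, ih, Finsupp.single_apply]
    by_cases h : i = k
    · subst h; simp [add_comm]
    · simp [h]

lemma mem_of_countM {l : List (Fin n)} {t : Fin n} (h : t ∈ (countM l).support) : t ∈ l := by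
  rw [Finsupp.mem_support_iff, countM_apply] at h
  exact List.count_pos_iff.1 (Nat.pos_of_ne_zero h)

lemma foldr_sorted (l : List (Fin n)) (hs : List.Pairwise (· ≤ ·) l) :
    l.foldr (fun i q => Fi b i q) (Finsupp.single 0 1) = Finsupp.single (countM l) 1 := by
  induction l with
  | nil => rw [countM_nil]; rfl
  | cons i t ih =>
    rw [List.foldr_cons, ih hs.of_cons]
    have hord : ∀ s ∈ (countM t).support, i ≤ s := fun s hsupp =>
      List.rel_of_pairwise_cons hs (mem_of_countM hsupp)
    rw [Fi_ordered b i _ hord, countM_cons, add_comm]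

lemma emb_eq (X : L) : emb K n b X = emb' b X := rfl

lemma Jker : Jspan K n b ≤ LinearMap.ker (Psi b) := by
  rw [Jspan, Submodule.span_le]
  rintro x ⟨Pq, Q, X, Y, rfl⟩
  rw [SetLike.mem_coe, LinearMap.mem_ker, Psi_apply, map_mul, map_mul]
  rw [emb_eq, emb_eq, emb_eq, rho_mid b X Y]
  simp

lemma count_flatMap_zero (α : Fin n → ℕ) (k : Fin n) :
    ∀ l : List (Fin n), k ∉ l → (l.flatMap fun i => List.replicate (α i) i).count k = 0 := by
  intro l
  induction l with
  | nil => simp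
  | cons i t ih =>
    intro hk
    rw [List.flatMap_cons, List.count_append, List.count_replicate,
      if_neg (by simp at hk; intro h; exact hk.1 ((beq_iff_eq).1 h).symm),
      ih (fun h => hk (List.mem_cons_of_mem _ h))]

lemma count_flatMapRep (α : Fin n → ℕ) (k : Fin n) :
    ∀ l : List (Fin n), l.Nodup → k ∈ l →
      (l.flatMap fun i => List.replicate (α i) i).count k = α k := by
  intro l
  induction l with
  | nil => intro _ h; exact absurd h (List.not_mem_nil (a := k))
  | cons i t ih =>
    intro hnd hk
    rw [List.flatMap_cons, List.count_append, List.count_replicate]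
    rcases eq_or_ne k i with h | h
    · subst h
      rw [if_pos (by simp), count_flatMap_zero α k t hnd.notMem]
      simp
    · rw [if_neg (by simp [beq_iff_eq]; exact fun hh => h hh.symm),
        ih hnd.of_cons (by rcases List.mem_cons.1 hk with h' | h'; exact absurd h' h; exact h')]
      simp

lemma word_count (α : Fin n → ℕ) (k : Fin n) : (word n α).count k = α k :=
  count_flatMapRep α k (List.finRange n) (List.nodup_finRange n) (List.mem_finRange k)

lemma sorted_replicate (m : ℕ) (i : Fin n) : List.Pairwise (· ≤ ·) (List.replicate m i) := by
  induction m with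
  | zero => simp
  | succ m ih =>
    rw [List.replicate_succ]
    exact List.Pairwise.cons (fun x hx => le_of_eq (List.eq_of_mem_replicate hx).symm) ih

lemma sorted_flatMapRep (α : Fin n → ℕ) :
    ∀ l : List (Fin n), List.Pairwise (· < ·) l →
      List.Pairwise (· ≤ ·) (l.flatMap fun i => List.replicate (α i) i) := by
  intro l
  induction l with
  | nil => intro _; simp
  | cons i t ih =>
    intro hp
    rw [List.flatMap_cons]
    rw [List.pairwise_append]
    refine ⟨?_, ih hp.of_cons, ?_⟩
    · exact sorted_replicate _ _
    · intro x hx y hy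
      rw [List.eq_of_mem_replicate hx]
      obtain ⟨s, hs, hys⟩ := List.mem_flatMap.1 hy
      rw [List.eq_of_mem_replicate hys]
      exact le_of_lt (List.rel_of_pairwise_cons hp hs)

lemma word_sorted (α : Fin n → ℕ) : List.Pairwise (· ≤ ·) (word n α) :=
  sorted_flatMapRep α (List.finRange n) (List.pairwise_lt_finRange n)

lemma Psi_word (α : Fin n → ℕ) :
    Psi b ((word n α).map (FreeAlgebra.ι K)).prod
      = Finsupp.single (Finsupp.equivFunOnFinite.symm α) 1 := by
  rw [Psi_apply, rho_prodl_apply, foldr_sorted b _ (word_sorted α)]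
  congr 1
  ext k
  rw [countM_apply, word_count]
  simp

theorem indep : LinearIndependent K
    (fun α : Fin n → ℕ =>
      (Jspan K n b).mkQ (((word n α).map (FreeAlgebra.ι K)).prod)) := by
  apply LinearIndependent.of_comp ((Jspan K n b).liftQ (Psi b) (Jker b))
  have heq : ((Jspan K n b).liftQ (Psi b) (Jker b) ∘ fun α : Fin n → ℕ =>
      (Jspan K n b).mkQ (((word n α).map (FreeAlgebra.ι K)).prod))
      = fun α : Fin n → ℕ => Finsupp.single (Finsupp.equivFunOnFinite.symm α) (1:K) := by
    funext α
    simp only [Function.comp_apply, Submodule.mkQ_apply, Submodule.liftQ_apply]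
    exact Psi_word b α
  rw [heq]
  have h1 : LinearIndependent K (fun γ : Fin n →₀ ℕ => Finsupp.single γ (1:K)) := by
    have := (Finsupp.basisSingleOne (ι := Fin n →₀ ℕ) (R := K)).linearIndependent
    rwa [Finsupp.coe_basisSingleOne] at this
  exact h1.comp _ (Equiv.injective _)

def prodl (l : List (Fin n)) : FreeAlgebra K (Fin n) := (l.map (FreeAlgebra.ι K)).prod

lemma prodl_append (u w : List (Fin n)) : prodl (u ++ w) = (prodl u * prodl w : FreeAlgebra K (Fin n)) := by
  rw [prodl, prodl, prodl, List.map_append, List.prod_append]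

lemma prodl_cons (i : Fin n) (w : List (Fin n)) :
    prodl (i :: w) = (FreeAlgebra.ι K i * prodl w : FreeAlgebra K (Fin n)) := by
  rw [prodl, prodl, List.map_cons, List.prod_cons]

lemma emb_basis (i : Fin n) : emb K n b (b i) = FreeAlgebra.ι K i := by
  rw [emb]
  simp [b.repr_self, Finsupp.single_apply, ite_smul]

/-- inversion count -/
def invc : List (Fin n) → ℕ
  | [] => 0
  | a :: t => t.countP (fun x => decide (x < a)) + invc t

lemma invc_le (l : List (Fin n)) : invc l ≤ l.length * l.length := by
  induction l with
  | nil => simp [invc]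
  | cons a t ih =>
    have h1 : t.countP (fun x => decide (x < a)) ≤ t.length := List.countP_le_length
    simp only [invc, List.length_cons]
    nlinarith

lemma invc_perm_cons {r1 r2 : List (Fin n)} (h : r1.Perm r2) (c : Fin n) :
    invc (c :: r1) = (r1.countP (fun x => decide (x < c))) + invc r1 := rfl

lemma invc_swap (aa bb : Fin n) (hba : bb < aa) :
    ∀ (u v : List (Fin n)), invc (u ++ aa :: bb :: v) = invc (u ++ bb :: aa :: v) + 1 := by
  intro u
  induction u with
  | nil =>
    intro v
    simp only [List.nil_append, invc, List.countP_cons]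
    have h1 : decide (bb < aa) = true := by simpa using hba
    have h2 : decide (aa < bb) = false := by simp [asymm hba]
    rw [h1, h2]
    simp only [Bool.false_eq_true, if_true, if_false]
    omega
  | cons c u ih =>
    intro v
    have hperm : (u ++ aa :: bb :: v).Perm (u ++ bb :: aa :: v) :=
      (List.Perm.swap bb aa v).append_left u
    simp only [List.cons_append, invc, List.append_eq]
    rw [hperm.countP_eq, ih v]
    omega

def mu (l : List (Fin n)) : ℕ := 4 ^ l.length + invc l

lemma sq_lt_four_pow (k : ℕ) : k * k < 4 ^ k := by
  induction k with
  | zero => simp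
  | succ k ih =>
    have h1 : k < 2 ^ k := Nat.lt_two_pow_self (n := k)
    have h2 : (2:ℕ) ^ k ≤ 4 ^ k := Nat.pow_le_pow_left (by norm_num) k
    have h3 : (4:ℕ) ^ (k+1) = 4 * 4 ^ k := by ring
    nlinarith

lemma mu_shorter {l t : List (Fin n)} (h : t.length + 1 = l.length) : mu t < mu l := by
  have h1 : invc t ≤ t.length * t.length := invc_le t
  have h2 : t.length * t.length < 4 ^ t.length := sq_lt_four_pow t.length
  have h3 : (4:ℕ) ^ l.length = 4 * 4 ^ t.length := by rw [← h]; ring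
  have h4 : (0:ℕ) < 4 ^ t.length := pow_pos (by norm_num) _
  unfold mu
  omega

lemma mkQ_swap (u v : List (Fin n)) (aa bb : Fin n) :
    (Jspan K n b).mkQ (prodl (u ++ aa :: bb :: v))
      = (Jspan K n b).mkQ (prodl (u ++ bb :: aa :: v))
        + ∑ k, b.repr ⁅b aa, b bb⁆ k • (Jspan K n b).mkQ (prodl (u ++ k :: v)) := by
  have hmem : (prodl u : FreeAlgebra K (Fin n)) * ((FreeAlgebra.ι K aa * FreeAlgebra.ι K bb
      - FreeAlgebra.ι K bb * FreeAlgebra.ι K aa - emb K n b ⁅b aa, b bb⁆) * prodl v)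
      ∈ Jspan K n b := by
    apply Submodule.subset_span
    refine ⟨prodl u, prodl v, b aa, b bb, ?_⟩
    rw [emb_basis, emb_basis, mul_assoc]
  have expand : (prodl u : FreeAlgebra K (Fin n)) * ((FreeAlgebra.ι K aa * FreeAlgebra.ι K bb
        - FreeAlgebra.ι K bb * FreeAlgebra.ι K aa - emb K n b ⁅b aa, b bb⁆) * prodl v)
      = prodl (u ++ aa :: bb :: v) - prodl (u ++ bb :: aa :: v)
        - ∑ k, b.repr ⁅b aa, b bb⁆ k • prodl (u ++ k :: v) := by
    simp only [emb, prodl_append, prodl_cons, Finset.sum_mul, Finset.mul_sum,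
      smul_mul_assoc, mul_smul_comm, mul_sub, sub_mul, mul_assoc]
  have hz : (Jspan K n b).mkQ ((prodl u : FreeAlgebra K (Fin n)) * ((FreeAlgebra.ι K aa * FreeAlgebra.ι K bb
      - FreeAlgebra.ι K bb * FreeAlgebra.ι K aa - emb K n b ⁅b aa, b bb⁆) * prodl v)) = 0 := by
    rw [Submodule.mkQ_apply, Submodule.Quotient.mk_eq_zero]
    exact hmem
  rw [expand, map_sub, map_sub, map_sum] at hz
  simp only [map_smul] at hz
  rw [sub_sub, sub_eq_zero] at hz
  exact hz

/-- the span of the ordered monomials in the quotient -/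
def SS : Submodule K (FreeAlgebra K (Fin n) ⧸ Jspan K n b) :=
  Submodule.span K
    (Set.range fun α : Fin n → ℕ =>
      (Jspan K n b).mkQ (((word n α).map (FreeAlgebra.ι K)).prod))

lemma exists_desc : ∀ l : List (Fin n), ¬ List.Pairwise (· ≤ ·) l →
    ∃ u aa bb v, l = u ++ aa :: bb :: v ∧ bb < aa := by
  intro l
  induction l with
  | nil => intro h; exact absurd (List.Pairwise.nil) h
  | cons x t ih =>
    intro h
    match t, ih with
    | [], _ => exact absurd (List.pairwise_singleton _ x) h
    | y :: t', ih =>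
      by_cases hxy : x ≤ y
      · have hns : ¬ List.Pairwise (· ≤ ·) (y :: t') := by
          intro hs
          apply h
          rw [List.pairwise_cons]
          refine ⟨?_, hs⟩
          intro c hc
          rcases List.mem_cons.1 hc with rfl | hc'
          · exact hxy
          · exact le_trans hxy (List.rel_of_pairwise_cons hs hc')
        obtain ⟨u, aa, bb, v, heq, hlt⟩ := ih hns
        exact ⟨x :: u, aa, bb, v, by rw [List.cons_append, heq], hlt⟩
      · exact ⟨[], x, y, t', by rw [List.nil_append], not_le.1 hxy⟩

lemma span_words : ∀ (N : ℕ) (l : List (Fin n)), mu l ≤ N →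
    (Jspan K n b).mkQ (prodl l) ∈ SS b := by
  intro N
  induction N using Nat.strong_induction_on with
  | _ N IH =>
  intro l hl
  by_cases hs : List.Pairwise (· ≤ ·) l
  · have hperm : (word n (fun k => l.count k)).Perm l := by
      rw [List.perm_iff_count]
      intro a
      rw [word_count]
    have heq : l = word n (fun k => l.count k) :=
      List.Perm.eq_of_pairwise' hs (word_sorted _) hperm.symm
    rw [heq]
    apply Submodule.subset_span
    exact ⟨fun k => l.count k, rfl⟩
  · obtain ⟨u, aa, bb, v, heq, hlt⟩ := exists_desc l hs
    subst heq
    rw [mkQ_swap b u v aa bb]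
    have hswap : mu (u ++ bb :: aa :: v) < N := by
      have := invc_swap aa bb hlt u v
      have hlen : (u ++ bb :: aa :: v).length = (u ++ aa :: bb :: v).length := by simp
      have : mu (u ++ bb :: aa :: v) < mu (u ++ aa :: bb :: v) := by
        unfold mu
        rw [hlen]
        omega
      omega
    apply Submodule.add_mem
    · exact IH _ hswap _ le_rfl
    · apply Submodule.sum_mem
      intro k _
      apply Submodule.smul_mem
      have hshort : mu (u ++ k :: v) < N := by
        have h1 : mu (u ++ k :: v) < mu (u ++ aa :: bb :: v) := by
          apply mu_shorter
          simp only [List.length_append, List.length_cons]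
          omega
        omega
      exact IH _ hshort _ le_rfl

theorem spans : Submodule.span K
    (Set.range fun α : Fin n → ℕ =>
      (Jspan K n b).mkQ (((word n α).map (FreeAlgebra.ι K)).prod)) = ⊤ := by
  rw [eq_top_iff]
  rintro x -
  obtain ⟨y, rfl⟩ := Submodule.mkQ_surjective (Jspan K n b) x
  have hlist : ∀ (ll : List (FreeAlgebra K (Fin n))),
      (∀ z ∈ ll, z ∈ Set.range (FreeAlgebra.ι K : Fin n → FreeAlgebra K (Fin n))) →
      ∃ li : List (Fin n), prodl li = ll.prod := by
    intro ll
    induction ll with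
    | nil => intro _; exact ⟨[], rfl⟩
    | cons z t ih =>
      intro hz
      obtain ⟨i, rfl⟩ := hz z (List.mem_cons_self (a := z) (l := t))
      obtain ⟨li, hli⟩ := ih (fun w hw => hz w (List.mem_cons_of_mem _ hw))
      exact ⟨i :: li, by rw [prodl_cons, hli, List.prod_cons]⟩
  have htop : y ∈ Submodule.span K
      ((Submonoid.closure (Set.range (FreeAlgebra.ι K : Fin n → FreeAlgebra K (Fin n)))) :
        Set (FreeAlgebra K (Fin n))) := by
    have h1 : Algebra.adjoin K (Set.range (FreeAlgebra.ι K : Fin n → FreeAlgebra K (Fin n))) = ⊤ :=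
      FreeAlgebra.adjoin_range_ι (R := K) (X := Fin n)
    have h2 : y ∈ Subalgebra.toSubmodule
        (Algebra.adjoin K (Set.range (FreeAlgebra.ι K : Fin n → FreeAlgebra K (Fin n)))) := by
      rw [h1, Algebra.top_toSubmodule]
      exact Submodule.mem_top
    rwa [Algebra.adjoin_eq_span] at h2
  induction htop using Submodule.span_induction with
  | mem z hz =>
    obtain ⟨ll, hll, rfl⟩ := Submonoid.exists_list_of_mem_closure hz
    obtain ⟨li, hli⟩ := hlist ll hll
    rw [← hli]
    exact span_words b (mu li) li le_rfl
  | zero => rw [map_zero]; exact Submodule.zero_mem _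
  | add z w hz hw ihz ihw => rw [map_add]; exact Submodule.add_mem _ ihz ihw
  | smul a z hz ihz => rw [map_smul]; exact Submodule.smul_mem _ a ihz

end PBW

theorem pbw_ordered_monomials_basis (K : Type) [Field K] [CharZero K]
    (n : ℕ) (L : Type) [LieRing L] [LieAlgebra K L] (b : Module.Basis (Fin n) K L) :
    LinearIndependent K
        (fun α : Fin n → ℕ =>
          (Jspan K n b).mkQ (((word n α).map (FreeAlgebra.ι K)).prod)) ∧
      Submodule.span K
          (Set.range fun α : Fin n → ℕ =>
            (Jspan K n b).mkQ (((word n α).map (FreeAlgebra.ι K)).prod)) = ⊤ :=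
  ⟨PBW.indep b, PBW.spans b⟩

end
end
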